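/- For any σ ∈ NC_S(2n) (a non-crossing partition of {1,…,2n} all of whose blocks consist of elements of the same parity), σ belongs to NC_0(2n) (i.e., the restriction of σ to the even elements equals the Kreweras complement of the restriction to the odd elements) if and only if the join σ ∨ 0̂_n of σ with the doubled partition 0̂_n = {(1,2),(3,4),…,(2n−1,2n)} in the lattice NC(2n) is the one-block partition 1_{2n}. -/

import Mathlib

open Finset

/-- Two blocks cross if there are i < k < p < q with i,p in one and k,q in the other. -/
def Crossing {α : Type*} [LinearOrder α] (B D : Finset α) : Prop :=
  ∃ i ∈ B, ∃ p ∈ B, ∃ k ∈ D, ∃ q ∈ D, i < k ∧ k < p ∧ p < q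

/-- A family of blocks is non-crossing. -/
def IsNonCrossing {α : Type*} [LinearOrder α] (P : Finset (Finset α)) : Prop :=
  ∀ B ∈ P, ∀ D ∈ P, B ≠ D → ¬ Crossing B D

/-- Non-crossing partitions of {1, ..., n}, modelled on `Fin n`. -/
def NC (n : ℕ) : Set (Finset (Finset (Fin n))) :=
  {P | (∀ B ∈ P, B.Nonempty) ∧ (∀ a : Fin n, ∃! B, B ∈ P ∧ a ∈ B) ∧ IsNonCrossing P}

/-- Reversed refinement order: every block of `π` is contained in a block of `σ`. -/
def ncle {n : ℕ} (π σ : Finset (Finset (Fin n))) : Prop :=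
  ∀ B ∈ π, ∃ D ∈ σ, B ⊆ D

/-- the position of `i` (an element "i") in the interlaced set 1 < 1̄ < 2 < 2̄ < ... -/
def oddE (n : ℕ) (i : Fin n) : Fin (2 * n) := ⟨2 * i.1, by have := i.2; omega⟩

/-- the position of `ī` (a "barred" element) in the interlaced set. -/
def evenE (n : ℕ) (i : Fin n) : Fin (2 * n) := ⟨2 * i.1 + 1, by have := i.2; omega⟩

/-- `γ ∪ σ` viewed on the interlaced set 1 < 1̄ < 2 < 2̄ < ... < n < n̄. -/
def interlace {n : ℕ} (γ σ : Finset (Finset (Fin n))) : Finset (Finset (Fin (2 * n))) :=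
  γ.image (fun B => B.image (oddE n)) ∪ σ.image (fun B => B.image (evenE n))

/-- `σ` is the Kreweras complement of `γ`: the largest non-crossing partition of the
barred copies such that `γ ∪ σ` is non-crossing on the interlaced set. -/
def IsKreweras {n : ℕ} (γ σ : Finset (Finset (Fin n))) : Prop :=
  σ ∈ NC n ∧ IsNonCrossing (interlace γ σ) ∧
    ∀ τ ∈ NC n, IsNonCrossing (interlace γ τ) → ncle τ σ

/-- Every block of `σ` consists of elements of the same parity. -/
def SameParity {n : ℕ} (σ : Finset (Finset (Fin (2 * n)))) : Prop :=
  ∀ B ∈ σ, ∀ a ∈ B, ∀ b ∈ B, a.1 % 2 = b.1 % 2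

/-- Restriction of `σ ∈ NC(2n)` to the odd elements (positions `2i`), as a partition of `Fin n`. -/
def restrictOdd (n : ℕ) (σ : Finset (Finset (Fin (2 * n)))) : Finset (Finset (Fin n)) :=
  (σ.image (fun B => Finset.univ.filter (fun i => oddE n i ∈ B))).filter (fun C => C.Nonempty)

/-- Restriction of `σ ∈ NC(2n)` to the even elements (positions `2i+1`), as a partition of `Fin n`. -/
def restrictEven (n : ℕ) (σ : Finset (Finset (Fin (2 * n)))) : Finset (Finset (Fin n)) :=
  (σ.image (fun B => Finset.univ.filter (fun i => evenE n i ∈ B))).filter (fun C => C.Nonempty)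

/-- The doubled partition `π̂`: each block `(i₁,…,iₛ)` becomes `(2i₁−1,2i₁,…,2iₛ−1,2iₛ)`. -/
def doubleP (n : ℕ) (π : Finset (Finset (Fin n))) : Finset (Finset (Fin (2 * n))) :=
  π.image (fun B => B.image (oddE n) ∪ B.image (evenE n))

/-- `0̂ₙ`, the doubling of the singleton partition: blocks `{2i−1, 2i}`. -/
def zeroHat (n : ℕ) : Finset (Finset (Fin (2 * n))) :=
  Finset.univ.image (fun i : Fin n => ({oddE n i, evenE n i} : Finset (Fin (2 * n))))

/-- `J` is the join of `P` and `Q` in the lattice `NC(m)`. -/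
def IsJoin (m : ℕ) (P Q J : Finset (Finset (Fin m))) : Prop :=
  J ∈ NC m ∧ ncle P J ∧ ncle Q J ∧ ∀ τ ∈ NC m, ncle P τ → ncle Q τ → ncle J τ

open scoped Classical

section Basics

/-- Partition property. -/
def IsPart {m : ℕ} (P : Finset (Finset (Fin m))) : Prop :=
  (∀ B ∈ P, B.Nonempty) ∧ (∀ a : Fin m, ∃! B, B ∈ P ∧ a ∈ B)

lemma NC.isPart {m : ℕ} {P : Finset (Finset (Fin m))} (h : P ∈ NC m) : IsPart P :=
  ⟨h.1, h.2.1⟩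

lemma blk_unique {m : ℕ} {P : Finset (Finset (Fin m))} (hP : IsPart P)
    {B D : Finset (Fin m)} {a : Fin m} (hB : B ∈ P) (hD : D ∈ P) (haB : a ∈ B) (haD : a ∈ D) :
    B = D := by
  obtain ⟨E, _, hu⟩ := hP.2 a
  rw [hu B ⟨hB, haB⟩, hu D ⟨hD, haD⟩]

lemma blk_disj {m : ℕ} {P : Finset (Finset (Fin m))} (hP : IsPart P)
    {B D : Finset (Fin m)} {a : Fin m} (hB : B ∈ P) (hD : D ∈ P) (hne : B ≠ D) (haB : a ∈ B) :
    a ∉ D := fun haD => hne (blk_unique hP hB hD haB haD)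

lemma not_crossing_singleton_left {m : ℕ} {x : Fin m} {D : Finset (Fin m)} :
    ¬ Crossing ({x} : Finset (Fin m)) D := by
  rintro ⟨i, hi, p, hp, k, hk, q, hq, h1, h2, h3⟩
  simp only [Finset.mem_singleton] at hi hp
  subst hi hp; omega

lemma not_crossing_singleton_right {m : ℕ} {x : Fin m} {D : Finset (Fin m)} :
    ¬ Crossing D ({x} : Finset (Fin m)) := by
  rintro ⟨i, hi, p, hp, k, hk, q, hq, h1, h2, h3⟩
  simp only [Finset.mem_singleton] at hk hq
  subst hk hq; omega

/-- both-direction noncrossing -/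
def NCboth {m : ℕ} (X Y : Finset (Fin m)) : Prop := ¬ Crossing X Y ∧ ¬ Crossing Y X

/-- Merge lemma: a connected union of two sets noncrossing with T stays noncrossing with T. -/
lemma merge_lemma {m : ℕ} {A B T : Finset (Fin m)}
    (hAT : NCboth A T) (hBT : NCboth B T) {x : Fin m} (hxA : x ∈ A) (hxB : x ∈ B)
    (hd : ∀ t ∈ T, t ∉ A ∧ t ∉ B) : NCboth (A ∪ B) T := by
  constructor
  · rintro ⟨i, hi, p, hp, k, hk, q, hq, h1, h2, h3⟩
    have hkx : k ≠ x := fun h => (hd k hk).1 (h ▸ hxA)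
    have hqx : q ≠ x := fun h => (hd q hq).1 (h ▸ hxA)
    rw [Finset.mem_union] at hi hp
    -- helper to conclude
    rcases hi with hiA | hiB <;> rcases hp with hpA | hpB
    · exact hAT.1 ⟨i, hiA, p, hpA, k, hk, q, hq, h1, h2, h3⟩
    · -- i ∈ A, p ∈ B
      rcases lt_trichotomy x k with hxk | hxk | hxk
      · exact hBT.1 ⟨x, hxB, p, hpB, k, hk, q, hq, hxk, h2, h3⟩
      · exact absurd hxk.symm hkx
      · rcases lt_trichotomy x q with hxq | hxq | hxq
        · exact hAT.1 ⟨i, hiA, x, hxA, k, hk, q, hq, h1, hxk, hxq⟩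
        · exact absurd hxq.symm hqx
        · exact hBT.2 ⟨k, hk, q, hq, p, hpB, x, hxB, h2, h3, hxq⟩
    · -- i ∈ B, p ∈ A : symmetric
      rcases lt_trichotomy x k with hxk | hxk | hxk
      · exact hAT.1 ⟨x, hxA, p, hpA, k, hk, q, hq, hxk, h2, h3⟩
      · exact absurd hxk.symm hkx
      · rcases lt_trichotomy x q with hxq | hxq | hxq
        · exact hBT.1 ⟨i, hiB, x, hxB, k, hk, q, hq, h1, hxk, hxq⟩
        · exact absurd hxq.symm hqx
        · exact hAT.2 ⟨k, hk, q, hq, p, hpA, x, hxA, h2, h3, hxq⟩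
    · exact hBT.1 ⟨i, hiB, p, hpB, k, hk, q, hq, h1, h2, h3⟩
  · rintro ⟨i, hi, p, hp, k, hk, q, hq, h1, h2, h3⟩
    have hxi : x ≠ i := fun h => (hd i hi).1 (h ▸ hxA)
    have hxp : x ≠ p := fun h => (hd p hp).1 (h ▸ hxA)
    rw [Finset.mem_union] at hk hq
    rcases hk with hkA | hkB <;> rcases hq with hqA | hqB
    · exact hAT.2 ⟨i, hi, p, hp, k, hkA, q, hqA, h1, h2, h3⟩
    · -- k ∈ A, q ∈ B
      rcases lt_trichotomy x i with hxi' | hxi' | hxi'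
      · exact hAT.1 ⟨x, hxA, k, hkA, i, hi, p, hp, hxi', h1, h2⟩
      · exact absurd hxi' hxi
      · rcases lt_trichotomy x p with hxp' | hxp' | hxp'
        · exact hBT.2 ⟨i, hi, p, hp, x, hxB, q, hqB, hxi', hxp', h3⟩
        · exact absurd hxp' hxp
        · exact hAT.2 ⟨i, hi, p, hp, k, hkA, x, hxA, h1, h2, hxp'⟩
    · -- k ∈ B, q ∈ A
      rcases lt_trichotomy x i with hxi' | hxi' | hxi'
      · exact hBT.1 ⟨x, hxB, k, hkB, i, hi, p, hp, hxi', h1, h2⟩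
      · exact absurd hxi' hxi
      · rcases lt_trichotomy x p with hxp' | hxp' | hxp'
        · exact hAT.2 ⟨i, hi, p, hp, x, hxA, q, hqA, hxi', hxp', h3⟩
        · exact absurd hxp' hxp
        · exact hBT.2 ⟨i, hi, p, hp, k, hkB, x, hxB, h1, h2, hxp'⟩
    · exact hBT.2 ⟨i, hi, p, hp, k, hkB, q, hqB, h1, h2, h3⟩

end Basics
section Components

open Relation

variable {m : ℕ}

/-- a and b lie in a common block of the family F -/
def sameBlk (F : Finset (Finset (Fin m))) (a b : Fin m) : Prop := ∃ B ∈ F, a ∈ B ∧ b ∈ B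

lemma sameBlk_symm {F : Finset (Finset (Fin m))} {a b : Fin m} (h : sameBlk F a b) :
    sameBlk F b a := by obtain ⟨B, hB, h1, h2⟩ := h; exact ⟨B, hB, h2, h1⟩

/-- the component of a w.r.t. relation r -/
noncomputable def comp (r : Fin m → Fin m → Prop) (a : Fin m) : Finset (Fin m) :=
  Finset.univ.filter (fun b => EqvGen r a b)

lemma mem_comp {r : Fin m → Fin m → Prop} {a b : Fin m} : b ∈ comp r a ↔ EqvGen r a b := by
  simp [comp]

lemma comp_eq_of {r : Fin m → Fin m → Prop} {a b : Fin m} (h : EqvGen r a b) :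
    comp r a = comp r b := by
  ext x; simp only [mem_comp]
  exact ⟨fun hx => (h.symm _ _).trans _ _ _ hx, fun hx => h.trans _ _ _ hx⟩

/-- the partition into components -/
noncomputable def comps (r : Fin m → Fin m → Prop) : Finset (Finset (Fin m)) :=
  Finset.univ.image (comp r)

lemma comps_isPart (r : Fin m → Fin m → Prop) : IsPart (comps r) := by
  constructor
  · rintro B hB
    simp only [comps, Finset.mem_image] at hB
    obtain ⟨a, _, rfl⟩ := hB
    exact ⟨a, mem_comp.2 (EqvGen.refl a)⟩
  · intro a
    refine ⟨comp r a, ⟨Finset.mem_image_of_mem _ (Finset.mem_univ a), mem_comp.2 (EqvGen.refl a)⟩, ?_⟩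
    rintro B ⟨hB, haB⟩
    simp only [comps, Finset.mem_image] at hB
    obtain ⟨c, _, rfl⟩ := hB
    exact comp_eq_of (mem_comp.1 haB)

/-- L1a : a chain between u and v yields a connected union of blocks that is
noncrossing against any block disjoint from it. -/
lemma chain_union_aux {F : Finset (Finset (Fin m))}
    (hNC : ∀ B ∈ F, ∀ D ∈ F, B ≠ D → ¬ Crossing B D)
    {u v : Fin m} (h : EqvGen (sameBlk F) u v) :
    ∃ W : Finset (Fin m), u ∈ W ∧ v ∈ W ∧ (∀ x ∈ W, EqvGen (sameBlk F) u x) ∧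
      ∀ D ∈ F, (∀ t ∈ D, t ∉ W) → NCboth W D := by
  induction h with
  | rel a b hab =>
      obtain ⟨B₀, hB₀, ha, hb⟩ := hab
      refine ⟨B₀, ha, hb, fun x hx => EqvGen.rel _ _ ⟨B₀, hB₀, ha, hx⟩, ?_⟩
      intro D hD hdisj
      have hne : B₀ ≠ D := fun h => (hdisj a (h ▸ ha)) ha
      exact ⟨hNC _ hB₀ _ hD hne, hNC _ hD _ hB₀ hne.symm⟩
  | refl a =>
      exact ⟨{a}, Finset.mem_singleton_self a, Finset.mem_singleton_self a,
        fun x hx => by rw [Finset.mem_singleton] at hx; subst hx; exact EqvGen.refl x,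
        fun D _ _ => ⟨not_crossing_singleton_left, not_crossing_singleton_right⟩⟩
  | symm a b hab ih =>
      obtain ⟨W, ha, hb, hall, hnc⟩ := ih
      exact ⟨W, hb, ha, fun x hx => (hab.symm _ _).trans _ _ _ (hall x hx), hnc⟩
  | trans a b c hab hbc ih1 ih2 =>
      obtain ⟨W1, ha1, hb1, hall1, hnc1⟩ := ih1
      obtain ⟨W2, hb2, hc2, hall2, hnc2⟩ := ih2
      refine ⟨W1 ∪ W2, Finset.mem_union_left _ ha1, Finset.mem_union_right _ hc2, ?_, ?_⟩
      · intro x hx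
        rcases Finset.mem_union.1 hx with h | h
        · exact hall1 x h
        · exact hab.trans _ _ _ (hall2 x h)
      · intro D hD hdisj
        have hd1 : ∀ t ∈ D, t ∉ W1 := fun t ht hw => hdisj t ht (Finset.mem_union_left _ hw)
        have hd2 : ∀ t ∈ D, t ∉ W2 := fun t ht hw => hdisj t ht (Finset.mem_union_right _ hw)
        exact merge_lemma (hnc1 D hD hd1) (hnc2 D hD hd2) hb1 hb2
          (fun t ht => ⟨hd1 t ht, hd2 t ht⟩)

/-- L1b : a chain yields a connected union noncrossing against a fixed set T that is
noncrossing against all blocks and not related to the chain. -/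
lemma chain_union_aux2 {F : Finset (Finset (Fin m))} {u v : Fin m}
    (h : EqvGen (sameBlk F) u v) :
    ∀ T : Finset (Fin m), (∀ D ∈ F, (∀ t ∈ D, t ∉ T) → NCboth T D) →
      (∀ t ∈ T, ¬ EqvGen (sameBlk F) u t) →
      ∃ W : Finset (Fin m), u ∈ W ∧ v ∈ W ∧ (∀ x ∈ W, EqvGen (sameBlk F) u x) ∧
        NCboth W T := by
  induction h with
  | rel a b hab =>
      intro T hT hrel
      obtain ⟨B₀, hB₀, ha, hb⟩ := hab
      have hdisj : ∀ t ∈ B₀, t ∉ T := by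
        intro t ht hT'
        exact hrel t hT' (EqvGen.rel _ _ ⟨B₀, hB₀, ha, ht⟩)
      have := hT B₀ hB₀ hdisj
      exact ⟨B₀, ha, hb, fun x hx => EqvGen.rel _ _ ⟨B₀, hB₀, ha, hx⟩, this.2, this.1⟩
  | refl a =>
      intro T _ _
      exact ⟨{a}, Finset.mem_singleton_self a, Finset.mem_singleton_self a,
        fun x hx => by rw [Finset.mem_singleton] at hx; subst hx; exact EqvGen.refl x,
        not_crossing_singleton_left, not_crossing_singleton_right⟩
  | symm a b hab ih =>
      intro T hT hrel
      have : ∀ t ∈ T, ¬ EqvGen (sameBlk F) a t := by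
        intro t ht hat
        exact hrel t ht ((hab.symm _ _).trans _ _ _ hat)
      obtain ⟨W, ha, hb, hall, hnc⟩ := ih T hT this
      exact ⟨W, hb, ha, fun x hx => (hab.symm _ _).trans _ _ _ (hall x hx), hnc⟩
  | trans a b c hab hbc ih1 ih2 =>
      intro T hT hrel
      have hrelb : ∀ t ∈ T, ¬ EqvGen (sameBlk F) b t := by
        intro t ht hbt
        exact hrel t ht (hab.trans _ _ _ hbt)
      obtain ⟨W1, ha1, hb1, hall1, hnc1⟩ := ih1 T hT hrel
      obtain ⟨W2, hb2, hc2, hall2, hnc2⟩ := ih2 T hT hrelb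
      refine ⟨W1 ∪ W2, Finset.mem_union_left _ ha1, Finset.mem_union_right _ hc2, ?_, ?_⟩
      · intro x hx
        rcases Finset.mem_union.1 hx with h | h
        · exact hall1 x h
        · exact hab.trans _ _ _ (hall2 x h)
      · exact merge_lemma hnc1 hnc2 hb1 hb2
          (fun t ht => ⟨fun hw => hrel t ht (hall1 t hw), fun hw => hrelb t ht (hall2 t hw)⟩)

/-- The components of a pairwise-noncrossing family form a noncrossing partition. -/
lemma comps_mem_NC {F : Finset (Finset (Fin m))}
    (hNC : ∀ B ∈ F, ∀ D ∈ F, B ≠ D → ¬ Crossing B D) :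
    comps (sameBlk F) ∈ NC m := by
  refine ⟨(comps_isPart _).1, (comps_isPart _).2, ?_⟩
  rintro B hB D hD hne ⟨i, hi, p, hp, k, hk, q, hq, h1, h2, h3⟩
  simp only [comps, Finset.mem_image] at hB hD
  obtain ⟨a, _, rfl⟩ := hB
  obtain ⟨b, _, rfl⟩ := hD
  have hip : EqvGen (sameBlk F) i p := ((mem_comp.1 hi).symm _ _).trans _ _ _ (mem_comp.1 hp)
  have hkq : EqvGen (sameBlk F) k q := ((mem_comp.1 hk).symm _ _).trans _ _ _ (mem_comp.1 hq)
  obtain ⟨W, hiW, hpW, hallW, hncW⟩ := chain_union_aux hNC hip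
  have hWa : ∀ x ∈ W, comp (sameBlk F) a = comp (sameBlk F) x := by
    intro x hx
    exact (comp_eq_of (mem_comp.1 hi)).trans (comp_eq_of (hallW x hx))
  have hrel : ∀ t ∈ W, ¬ EqvGen (sameBlk F) k t := by
    intro t ht hkt
    apply hne
    rw [hWa t ht, comp_eq_of (mem_comp.1 hk), comp_eq_of hkt]
  obtain ⟨W', hkW', hqW', _, hncW'⟩ := chain_union_aux2 hkq W hncW hrel
  exact hncW'.2 ⟨i, hiW, p, hpW, k, hkW', q, hqW', h1, h2, h3⟩
  
end Components
section Euler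

open Relation

variable {m : ℕ}

lemma eqvGen_le {r s : Fin m → Fin m → Prop} (h : ∀ a b, r a b → EqvGen s a b) :
    ∀ a b, EqvGen r a b → EqvGen s a b := by
  intro a b hab
  induction hab with
  | rel x y hxy => exact h x y hxy
  | refl x => exact EqvGen.refl x
  | symm x y _ ih => exact ih.symm x y
  | trans x y z _ _ ih1 ih2 => exact ih1.trans _ _ _ ih2

lemma comps_congr {r s : Fin m → Fin m → Prop} (h : ∀ a b, EqvGen r a b ↔ EqvGen s a b) :
    comps r = comps s := by
  have : comp r = comp s := by
    funext a; ext x; simp only [mem_comp]; exact h a x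
  simp [comps, this]

/-- Adding one generating pair decreases the number of classes by at most one. -/
lemma comps_card_add_edge (r : Fin m → Fin m → Prop) (c c' : Fin m) :
    (comps r).card ≤ (comps (fun a b => r a b ∨ (a = c ∧ b = c') ∨ (a = c' ∧ b = c))).card + 1 := by
  set s := fun a b => r a b ∨ (a = c ∧ b = c') ∨ (a = c' ∧ b = c) with hs
  have hQ : ∀ a b, EqvGen s a b → EqvGen r a b ∨
      ((EqvGen r a c ∨ EqvGen r a c') ∧ (EqvGen r b c ∨ EqvGen r b c')) := by
    intro a b hab
    induction hab with
    | rel x y hxy =>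
        rcases hxy with h | ⟨rfl, rfl⟩ | ⟨rfl, rfl⟩
        · exact Or.inl (EqvGen.rel _ _ h)
        · exact Or.inr ⟨Or.inl (EqvGen.refl _), Or.inr (EqvGen.refl _)⟩
        · exact Or.inr ⟨Or.inr (EqvGen.refl _), Or.inl (EqvGen.refl _)⟩
    | refl x => exact Or.inl (EqvGen.refl x)
    | symm x y _ ih =>
        rcases ih with h | ⟨h1, h2⟩
        · exact Or.inl (h.symm _ _)
        · exact Or.inr ⟨h2, h1⟩
    | trans x y z _ _ ih1 ih2 =>
        rcases ih1 with h1 | ⟨ha, hb⟩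
        · rcases ih2 with h2 | ⟨hc, hd⟩
          · exact Or.inl (h1.trans _ _ _ h2)
          · refine Or.inr ⟨?_, hd⟩
            rcases hc with h | h
            · exact Or.inl (h1.trans _ _ _ h)
            · exact Or.inr (h1.trans _ _ _ h)
        · rcases ih2 with h2 | ⟨hc, hd⟩
          · refine Or.inr ⟨ha, ?_⟩
            rcases hb with h | h
            · exact Or.inl ((h2.symm _ _).trans _ _ _ h)
            · exact Or.inr ((h2.symm _ _).trans _ _ _ h)
          · exact Or.inr ⟨ha, hd⟩
  have hrs : ∀ a b, EqvGen r a b → EqvGen s a b :=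
    eqvGen_le (fun a b hab => EqvGen.rel a b (Or.inl hab))
  -- each r-class is either the class of c, of c', or an s-class
  have hsub : comps r ⊆ insert (comp r c) (insert (comp r c') ((comps s).erase (comp s c))) := by
    intro K hK
    simp only [comps, Finset.mem_image] at hK
    obtain ⟨a, _, rfl⟩ := hK
    by_cases hc1 : EqvGen r a c
    · rw [Finset.mem_insert]; exact Or.inl (comp_eq_of hc1)
    by_cases hc2 : EqvGen r a c'
    · rw [Finset.mem_insert, Finset.mem_insert]
      exact Or.inr (Or.inl (comp_eq_of hc2))
    have heq : comp r a = comp s a := by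
      ext x
      simp only [mem_comp]
      refine ⟨fun h => hrs _ _ h, fun h => ?_⟩
      rcases hQ a x h with h' | ⟨h1, _⟩
      · exact h'
      · rcases h1 with h1 | h1
        · exact absurd h1 hc1
        · exact absurd h1 hc2
    rw [Finset.mem_insert, Finset.mem_insert, heq]
    refine Or.inr (Or.inr (Finset.mem_erase.2 ⟨?_, Finset.mem_image_of_mem _ (Finset.mem_univ a)⟩))
    intro hbad
    apply hc1
    have : c ∈ comp s a := hbad ▸ mem_comp.2 (EqvGen.refl c)
    have hsac : EqvGen s a c := mem_comp.1 this
    rcases hQ a c hsac with h' | ⟨h1, _⟩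
    · exact h'
    · rcases h1 with h1 | h1
      · exact h1
      · exact absurd h1 hc2
  have hmem : comp s c ∈ comps s := Finset.mem_image_of_mem _ (Finset.mem_univ c)
  have h1 := Finset.card_le_card hsub
  have h2 := Finset.card_insert_le (comp r c) (insert (comp r c') ((comps s).erase (comp s c)))
  have h3 := Finset.card_insert_le (comp r c') ((comps s).erase (comp s c))
  have h4 : ((comps s).erase (comp s c)).card = (comps s).card - 1 :=
    Finset.card_erase_of_mem hmem
  have h5 : 1 ≤ (comps s).card := Finset.card_pos.2 ⟨_, hmem⟩
  omega

end Euler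
section EulerMain

open Relation

variable {m : ℕ}

lemma part_sum {P : Finset (Finset (Fin m))} (hP : IsPart P) :
    ∑ B ∈ P, B.card = m := by
  have hU : Finset.univ = P.biUnion (fun x => x) := by
    ext a
    simp only [Finset.mem_univ, true_iff, Finset.mem_biUnion]
    obtain ⟨B, ⟨hB, haB⟩, _⟩ := hP.2 a
    exact ⟨B, hB, haB⟩
  have hd : ∀ B ∈ P, ∀ D ∈ P, B ≠ D → Disjoint (id B) (id D) := by
    intro B hB D hD hne
    rw [Finset.disjoint_left]
    intro a haB
    exact blk_disj hP hB hD hne haB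
  have := Finset.card_biUnion hd
  simp only [id_eq] at this
  rw [show (P.biUnion id) = P.biUnion (fun x => x) from rfl, ← hU] at this
  simp only [Finset.card_univ, Fintype.card_fin] at this
  omega

lemma part_card_le {P : Finset (Finset (Fin m))} (hP : IsPart P) : P.card ≤ m := by
  have h1 : ∑ B ∈ P, B.card = m := part_sum hP
  have h2 : ∀ B ∈ P, 1 ≤ B.card := fun B hB => Finset.card_pos.2 (hP.1 B hB)
  calc P.card = ∑ _B ∈ P, 1 := by simp
    _ ≤ ∑ B ∈ P, B.card := Finset.sum_le_sum h2
    _ = m := h1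

lemma euler_singletons {γ δ : Finset (Finset (Fin m))} (hγ : IsPart γ) (hδ : IsPart δ)
    (hsing : ∀ B ∈ δ, ∀ x ∈ B, ∀ y ∈ B, x = y) :
    γ.card + δ.card ≤ m + (comps (fun a b => sameBlk γ a b ∨ sameBlk δ a b)).card := by
  have hδm : δ.card = m := by
    have h1 : ∑ B ∈ δ, B.card = m := part_sum hδ
    have h2 : ∀ B ∈ δ, B.card = 1 := by
      intro B hB
      obtain ⟨x, hx⟩ := hδ.1 B hB
      rw [Finset.card_eq_one]
      refine ⟨x, ?_⟩
      ext y
      simp only [Finset.mem_singleton]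
      exact ⟨fun hy => hsing B hB y hy x hx, fun hy => hy ▸ hx⟩
    rw [Finset.sum_congr rfl h2] at h1
    simpa using h1
  have hkey : ∀ a b, EqvGen (fun a b => sameBlk γ a b ∨ sameBlk δ a b) a b ↔ sameBlk γ a b := by
    intro a b
    constructor
    · intro h
      induction h with
      | rel x y hxy =>
          rcases hxy with h | ⟨B, hB, hx, hy⟩
          · exact h
          · have := hsing B hB x hx y hy
            subst this
            obtain ⟨Ba, ⟨hBa, haBa⟩, _⟩ := hγ.2 x
            exact ⟨Ba, hBa, haBa, haBa⟩
      | refl x =>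
          obtain ⟨Ba, ⟨hBa, haBa⟩, _⟩ := hγ.2 x
          exact ⟨Ba, hBa, haBa, haBa⟩
      | symm x y _ ih => exact sameBlk_symm ih
      | trans x y z _ _ ih1 ih2 =>
          obtain ⟨B1, hB1, hx1, hy1⟩ := ih1
          obtain ⟨B2, hB2, hy2, hz2⟩ := ih2
          have hB12 : B1 = B2 := blk_unique hγ hB1 hB2 hy1 hy2
          exact ⟨B2, hB2, hB12 ▸ hx1, hz2⟩
    · exact fun h => EqvGen.rel _ _ (Or.inl h)
  have hcomps : comps (fun a b => sameBlk γ a b ∨ sameBlk δ a b) = γ := by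
    ext B
    simp only [comps, Finset.mem_image]
    constructor
    · rintro ⟨a, _, rfl⟩
      obtain ⟨Ba, ⟨hBa, haBa⟩, hu⟩ := hγ.2 a
      have : comp (fun a b => sameBlk γ a b ∨ sameBlk δ a b) a = Ba := by
        ext x
        rw [mem_comp, hkey]
        constructor
        · rintro ⟨B', hB', ha', hx'⟩
          rwa [← blk_unique hγ hB' hBa ha' haBa]
        · exact fun hx => ⟨Ba, hBa, haBa, hx⟩
      rw [this]; exact hBa
    · intro hB
      obtain ⟨a, ha⟩ := hγ.1 B hB
      refine ⟨a, Finset.mem_univ a, ?_⟩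
      ext x
      rw [mem_comp, hkey]
      constructor
      · rintro ⟨B', hB', ha', hx'⟩
        rwa [← blk_unique hγ hB' hB ha' ha]
      · exact fun hx => ⟨B, hB, ha, hx⟩
  rw [hcomps, hδm]
  omega

end EulerMain
section EulerInduction

open Relation

variable {m : ℕ}

lemma part_card_lt {δ : Finset (Finset (Fin m))} (hδ : IsPart δ) {B : Finset (Fin m)}
    (hB : B ∈ δ) (hB2 : 2 ≤ B.card) : δ.card + 1 ≤ m := by
  have hsum : ∑ D ∈ δ, D.card = m := part_sum hδ
  have hge : ∀ D ∈ δ, 1 ≤ D.card := fun D hD => Finset.card_pos.2 (hδ.1 D hD)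
  calc δ.card + 1 = (∑ _D ∈ δ.erase B, 1) + 1 + 1 := by
        rw [Finset.sum_const, smul_eq_mul, mul_one, Finset.card_erase_of_mem hB]
        have : 1 ≤ δ.card := Finset.card_pos.2 ⟨B, hB⟩
        omega
    _ ≤ (∑ D ∈ δ.erase B, D.card) + B.card := by
        have h1 : ∑ _D ∈ δ.erase B, 1 ≤ ∑ D ∈ δ.erase B, D.card :=
          Finset.sum_le_sum (fun D hD => hge D (Finset.mem_of_mem_erase hD))
        omega
    _ = ∑ D ∈ δ, D.card := Finset.sum_erase_add _ _ hB
    _ = m := hsum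

lemma euler {γ : Finset (Finset (Fin m))} (hγ : IsPart γ) :
    ∀ k : ℕ, ∀ δ : Finset (Finset (Fin m)), IsPart δ → m - δ.card ≤ k →
    γ.card + δ.card ≤ m + (comps (fun a b => sameBlk γ a b ∨ sameBlk δ a b)).card := by
  intro k
  induction k with
  | zero =>
      intro δ hδ hk
      refine euler_singletons hγ hδ ?_
      intro B hB x hx y hy
      by_contra hne
      have hB2 : 2 ≤ B.card := Finset.one_lt_card.2 ⟨x, hx, y, hy, fun h => hne h⟩
      have := part_card_lt hδ hB hB2
      have hcard : δ.card ≤ m := part_card_le hδ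
      omega
  | succ k ih =>
      intro δ hδ hk
      by_cases hsing : ∀ B ∈ δ, ∀ x ∈ B, ∀ y ∈ B, x = y
      · exact euler_singletons hγ hδ hsing
      push_neg at hsing
      obtain ⟨C, hC, c, hc, c', hc', hne⟩ := hsing
      set δ' : Finset (Finset (Fin m)) := insert {c} (insert (C.erase c) (δ.erase C)) with hδ'def
      have hc'e : c' ∈ C.erase c := Finset.mem_erase.2 ⟨fun h => hne (h.symm ▸ rfl), hc'⟩
      have hsc : ({c} : Finset (Fin m)) ∉ insert (C.erase c) (δ.erase C) := by
        simp only [Finset.mem_insert]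
        push_neg
        constructor
        · intro h
          rw [← h, Finset.mem_singleton] at hc'e
          exact hne hc'e.symm
        · intro h
          have h1 := Finset.mem_of_mem_erase h
          have h2 := Finset.ne_of_mem_erase h
          have : ({c} : Finset (Fin m)) = C :=
            blk_unique hδ h1 hC (Finset.mem_singleton_self c) hc
          exact h2 this
      have hce : C.erase c ∉ δ.erase C := by
        intro h
        have h1 := Finset.mem_of_mem_erase h
        have heq : C.erase c = C := blk_unique hδ h1 hC hc'e hc'
        have h2 := Finset.notMem_erase c C
        rw [heq] at h2
        exact h2 hc
      -- δ' is a partition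
      have hpart' : IsPart δ' := by
        constructor
        · intro B hB
          rcases Finset.mem_insert.1 hB with rfl | hB
          · exact ⟨c, Finset.mem_singleton_self c⟩
          rcases Finset.mem_insert.1 hB with rfl | hB
          · exact ⟨c', hc'e⟩
          · exact hδ.1 B (Finset.mem_of_mem_erase hB)
        · intro a
          by_cases hac : a = c
          · subst hac
            refine ⟨{a}, ⟨Finset.mem_insert_self _ _, Finset.mem_singleton_self a⟩, ?_⟩
            rintro B ⟨hB, haB⟩
            rcases Finset.mem_insert.1 hB with rfl | hB
            · rfl
            rcases Finset.mem_insert.1 hB with rfl | hB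
            · exact absurd (Finset.mem_erase.1 haB).1 (by simp)
            · exfalso
              have h1 := Finset.mem_of_mem_erase hB
              have heq : B = C := blk_unique hδ h1 hC haB hc
              exact Finset.ne_of_mem_erase hB heq
          by_cases haC : a ∈ C
          · refine ⟨C.erase c, ⟨Finset.mem_insert_of_mem (Finset.mem_insert_self _ _),
              Finset.mem_erase.2 ⟨hac, haC⟩⟩, ?_⟩
            rintro B ⟨hB, haB⟩
            rcases Finset.mem_insert.1 hB with rfl | hB
            · exact absurd (Finset.mem_singleton.1 haB) hac
            rcases Finset.mem_insert.1 hB with rfl | hB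
            · rfl
            · exfalso
              have h1 := Finset.mem_of_mem_erase hB
              have heq : B = C := blk_unique hδ h1 hC haB haC
              exact Finset.ne_of_mem_erase hB heq
          · obtain ⟨B₀, ⟨hB₀, haB₀⟩, hu⟩ := hδ.2 a
            have hBC : B₀ ≠ C := fun h => haC (h ▸ haB₀)
            refine ⟨B₀, ⟨Finset.mem_insert_of_mem (Finset.mem_insert_of_mem
              (Finset.mem_erase.2 ⟨hBC, hB₀⟩)), haB₀⟩, ?_⟩
            rintro B ⟨hB, haB⟩
            rcases Finset.mem_insert.1 hB with rfl | hB
            · exact absurd (Finset.mem_singleton.1 haB) hac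
            rcases Finset.mem_insert.1 hB with rfl | hB
            · exact absurd (Finset.mem_of_mem_erase haB) haC
            · exact hu B ⟨Finset.mem_of_mem_erase hB, haB⟩
      -- cardinality of δ'
      have hcard' : δ'.card = δ.card + 1 := by
        rw [hδ'def, Finset.card_insert_of_notMem hsc, Finset.card_insert_of_notMem hce,
          Finset.card_erase_of_mem hC]
        have : 1 ≤ δ.card := Finset.card_pos.2 ⟨C, hC⟩
        omega
      have hCcard : 2 ≤ C.card := Finset.one_lt_card.2 ⟨c, hc, c', hc', hne⟩
      have hlt := part_card_lt hδ hC hCcard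
      -- relations agree after adding the edge (c, c')
      set rel := fun a b => sameBlk γ a b ∨ sameBlk δ a b with hrel
      set rel' := fun a b => sameBlk γ a b ∨ sameBlk δ' a b with hrel'
      have hiff : ∀ a b, EqvGen (fun a b => rel' a b ∨ (a = c ∧ b = c') ∨ (a = c' ∧ b = c)) a b
          ↔ EqvGen rel a b := by
        intro a b
        constructor
        · apply eqvGen_le
          rintro x y (h | ⟨rfl, rfl⟩ | ⟨rfl, rfl⟩)
          · rcases h with h | ⟨B, hB, hx, hy⟩
            · exact EqvGen.rel _ _ (Or.inl h)
            · rcases Finset.mem_insert.1 hB with rfl | hB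
              · rw [Finset.mem_singleton] at hx hy
                subst hx; subst hy; exact EqvGen.refl _
              rcases Finset.mem_insert.1 hB with rfl | hB
              · exact EqvGen.rel _ _ (Or.inr ⟨C, hC, Finset.mem_of_mem_erase hx,
                  Finset.mem_of_mem_erase hy⟩)
              · exact EqvGen.rel _ _ (Or.inr ⟨B, Finset.mem_of_mem_erase hB, hx, hy⟩)
          · exact EqvGen.rel _ _ (Or.inr ⟨C, hC, hc, hc'⟩)
          · exact EqvGen.rel _ _ (Or.inr ⟨C, hC, hc', hc⟩)
        · apply eqvGen_le
          rintro x y (h | ⟨B, hB, hx, hy⟩)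
          · exact EqvGen.rel _ _ (Or.inl (Or.inl h))
          by_cases hBC : B = C
          · subst hBC
            have hmem : ∀ z ∈ B, z ≠ c → EqvGen
                (fun a b => rel' a b ∨ (a = c ∧ b = c') ∨ (a = c' ∧ b = c)) c' z := by
              intro z hz hzc
              exact EqvGen.rel _ _ (Or.inl (Or.inr ⟨B.erase c,
                Finset.mem_insert_of_mem (Finset.mem_insert_self _ _), hc'e,
                Finset.mem_erase.2 ⟨hzc, hz⟩⟩))
            have hedge : EqvGen (fun a b => rel' a b ∨ (a = c ∧ b = c') ∨ (a = c' ∧ b = c)) c c' :=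
              EqvGen.rel _ _ (Or.inr (Or.inl ⟨rfl, rfl⟩))
            have hto : ∀ z ∈ B, EqvGen
                (fun a b => rel' a b ∨ (a = c ∧ b = c') ∨ (a = c' ∧ b = c)) c z := by
              intro z hz
              by_cases hzc : z = c
              · subst hzc; exact EqvGen.refl z
              · exact hedge.trans _ _ _ (hmem z hz hzc)
            exact ((hto x hx).symm _ _).trans _ _ _ (hto y hy)
          · exact EqvGen.rel _ _ (Or.inl (Or.inr ⟨B,
              Finset.mem_insert_of_mem (Finset.mem_insert_of_mem
                (Finset.mem_erase.2 ⟨hBC, hB⟩)), hx, hy⟩))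
      have hcongr : comps (fun a b => rel' a b ∨ (a = c ∧ b = c') ∨ (a = c' ∧ b = c)) =
          comps rel := comps_congr hiff
      have hedge := comps_card_add_edge rel' c c'
      rw [hcongr] at hedge
      have hih := ih δ' hpart' (by omega)
      rw [← hrel'] at hih
      rw [hcard'] at hih
      omega
end EulerInduction
section Structure

variable {n : ℕ}

lemma oddE_lt_iff {i j : Fin n} : oddE n i < oddE n j ↔ i < j := by
  simp only [oddE, Fin.lt_def]; omega

lemma evenE_lt_iff {i j : Fin n} : evenE n i < evenE n j ↔ i < j := by
  simp only [evenE, Fin.lt_def]; omega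

lemma oddE_inj {i j : Fin n} (h : oddE n i = oddE n j) : i = j := by
  simp only [oddE, Fin.mk.injEq] at h
  exact Fin.ext (by omega)

lemma evenE_inj {i j : Fin n} (h : evenE n i = evenE n j) : i = j := by
  simp only [evenE, Fin.mk.injEq] at h
  exact Fin.ext (by omega)

lemma oddE_ne_evenE {i j : Fin n} : oddE n i ≠ evenE n j := by
  simp only [oddE, evenE, ne_eq, Fin.mk.injEq]
  omega

/-- mixed crossing patterns, stated on Fin n -/
def crossOE (X Y : Finset (Fin n)) : Prop :=
  ∃ i ∈ X, ∃ p ∈ X, ∃ k ∈ Y, ∃ q ∈ Y, i ≤ k ∧ k < p ∧ p ≤ q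

def crossEO (X Y : Finset (Fin n)) : Prop :=
  ∃ i ∈ X, ∃ p ∈ X, ∃ k ∈ Y, ∃ q ∈ Y, i < k ∧ k ≤ p ∧ p < q

lemma crossing_oo {X Y : Finset (Fin n)} :
    Crossing (X.image (oddE n)) (Y.image (oddE n)) ↔ Crossing X Y := by
  constructor
  · rintro ⟨i, hi, p, hp, k, hk, q, hq, h1, h2, h3⟩
    simp only [Finset.mem_image] at hi hp hk hq
    obtain ⟨i', hi', rfl⟩ := hi
    obtain ⟨p', hp', rfl⟩ := hp
    obtain ⟨k', hk', rfl⟩ := hk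
    obtain ⟨q', hq', rfl⟩ := hq
    exact ⟨i', hi', p', hp', k', hk', q', hq', oddE_lt_iff.1 h1, oddE_lt_iff.1 h2,
      oddE_lt_iff.1 h3⟩
  · rintro ⟨i, hi, p, hp, k, hk, q, hq, h1, h2, h3⟩
    exact ⟨_, Finset.mem_image_of_mem _ hi, _, Finset.mem_image_of_mem _ hp,
      _, Finset.mem_image_of_mem _ hk, _, Finset.mem_image_of_mem _ hq,
      oddE_lt_iff.2 h1, oddE_lt_iff.2 h2, oddE_lt_iff.2 h3⟩

lemma crossing_ee {X Y : Finset (Fin n)} :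
    Crossing (X.image (evenE n)) (Y.image (evenE n)) ↔ Crossing X Y := by
  constructor
  · rintro ⟨i, hi, p, hp, k, hk, q, hq, h1, h2, h3⟩
    simp only [Finset.mem_image] at hi hp hk hq
    obtain ⟨i', hi', rfl⟩ := hi
    obtain ⟨p', hp', rfl⟩ := hp
    obtain ⟨k', hk', rfl⟩ := hk
    obtain ⟨q', hq', rfl⟩ := hq
    exact ⟨i', hi', p', hp', k', hk', q', hq', evenE_lt_iff.1 h1, evenE_lt_iff.1 h2,
      evenE_lt_iff.1 h3⟩
  · rintro ⟨i, hi, p, hp, k, hk, q, hq, h1, h2, h3⟩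
    exact ⟨_, Finset.mem_image_of_mem _ hi, _, Finset.mem_image_of_mem _ hp,
      _, Finset.mem_image_of_mem _ hk, _, Finset.mem_image_of_mem _ hq,
      evenE_lt_iff.2 h1, evenE_lt_iff.2 h2, evenE_lt_iff.2 h3⟩

lemma crossing_oe {X Y : Finset (Fin n)} :
    Crossing (X.image (oddE n)) (Y.image (evenE n)) ↔ crossOE X Y := by
  constructor
  · rintro ⟨i, hi, p, hp, k, hk, q, hq, h1, h2, h3⟩
    simp only [Finset.mem_image] at hi hp hk hq
    obtain ⟨i', hi', rfl⟩ := hi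
    obtain ⟨p', hp', rfl⟩ := hp
    obtain ⟨k', hk', rfl⟩ := hk
    obtain ⟨q', hq', rfl⟩ := hq
    simp only [oddE, evenE, Fin.lt_def] at h1 h2 h3
    exact ⟨i', hi', p', hp', k', hk', q', hq', by omega, by omega, by omega⟩
  · rintro ⟨i, hi, p, hp, k, hk, q, hq, h1, h2, h3⟩
    refine ⟨_, Finset.mem_image_of_mem _ hi, _, Finset.mem_image_of_mem _ hp,
      _, Finset.mem_image_of_mem _ hk, _, Finset.mem_image_of_mem _ hq, ?_, ?_, ?_⟩
    all_goals simp only [oddE, evenE, Fin.lt_def]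
    · have := Fin.le_def.1 h1; omega
    · have := Fin.lt_def.1 h2; omega
    · have := Fin.le_def.1 h3; omega

lemma crossing_eo {X Y : Finset (Fin n)} :
    Crossing (X.image (evenE n)) (Y.image (oddE n)) ↔ crossEO X Y := by
  constructor
  · rintro ⟨i, hi, p, hp, k, hk, q, hq, h1, h2, h3⟩
    simp only [Finset.mem_image] at hi hp hk hq
    obtain ⟨i', hi', rfl⟩ := hi
    obtain ⟨p', hp', rfl⟩ := hp
    obtain ⟨k', hk', rfl⟩ := hk
    obtain ⟨q', hq', rfl⟩ := hq
    simp only [oddE, evenE, Fin.lt_def] at h1 h2 h3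
    refine ⟨i', hi', p', hp', k', hk', q', hq', by omega, ?_, by omega⟩
    rw [Fin.le_def]; omega
  · rintro ⟨i, hi, p, hp, k, hk, q, hq, h1, h2, h3⟩
    refine ⟨_, Finset.mem_image_of_mem _ hi, _, Finset.mem_image_of_mem _ hp,
      _, Finset.mem_image_of_mem _ hk, _, Finset.mem_image_of_mem _ hq, ?_, ?_, ?_⟩
    all_goals simp only [oddE, evenE, Fin.lt_def]
    · have := Fin.lt_def.1 h1; omega
    · have := Fin.le_def.1 h2; omega
    · have := Fin.lt_def.1 h3; omega

end Structure
section Restrict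

variable {n : ℕ} {σ : Finset (Finset (Fin (2 * n)))}

lemma mem_restrictOdd_iff {C : Finset (Fin n)} :
    C ∈ restrictOdd n σ ↔ (∃ B ∈ σ, C = Finset.univ.filter (fun i => oddE n i ∈ B)) ∧
      C.Nonempty := by
  simp only [restrictOdd, Finset.mem_filter, Finset.mem_image]
  constructor
  · rintro ⟨⟨B, hB, rfl⟩, h2⟩
    exact ⟨⟨B, hB, rfl⟩, h2⟩
  · rintro ⟨⟨B, hB, rfl⟩, h2⟩
    exact ⟨⟨B, hB, rfl⟩, h2⟩

lemma mem_restrictEven_iff {C : Finset (Fin n)} :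
    C ∈ restrictEven n σ ↔ (∃ B ∈ σ, C = Finset.univ.filter (fun i => evenE n i ∈ B)) ∧
      C.Nonempty := by
  simp only [restrictEven, Finset.mem_filter, Finset.mem_image]
  constructor
  · rintro ⟨⟨B, hB, rfl⟩, h2⟩
    exact ⟨⟨B, hB, rfl⟩, h2⟩
  · rintro ⟨⟨B, hB, rfl⟩, h2⟩
    exact ⟨⟨B, hB, rfl⟩, h2⟩

lemma block_odd_eq (hS : SameParity σ) {B : Finset (Fin (2 * n))} (hB : B ∈ σ)
    {i : Fin n} (hi : oddE n i ∈ B) :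
    B = (Finset.univ.filter (fun j => oddE n j ∈ B)).image (oddE n) := by
  ext b
  simp only [Finset.mem_image, Finset.mem_filter, Finset.mem_univ, true_and]
  constructor
  · intro hb
    have hpar : b.1 % 2 = 0 := by
      have := hS B hB b hb (oddE n i) hi
      simp only [oddE] at this
      omega
    refine ⟨⟨b.1 / 2, by have := b.2; omega⟩, ?_, ?_⟩
    · have : oddE n ⟨b.1 / 2, by have := b.2; omega⟩ = b := Fin.ext (by simp [oddE]; omega)
      rwa [this]
    · exact Fin.ext (by simp [oddE]; omega)
  · rintro ⟨j, hj, rfl⟩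
    exact hj

lemma block_even_eq (hS : SameParity σ) {B : Finset (Fin (2 * n))} (hB : B ∈ σ)
    {i : Fin n} (hi : evenE n i ∈ B) :
    B = (Finset.univ.filter (fun j => evenE n j ∈ B)).image (evenE n) := by
  ext b
  simp only [Finset.mem_image, Finset.mem_filter, Finset.mem_univ, true_and]
  constructor
  · intro hb
    have hpar : b.1 % 2 = 1 := by
      have := hS B hB b hb (evenE n i) hi
      simp only [evenE] at this
      omega
    refine ⟨⟨b.1 / 2, by have := b.2; omega⟩, ?_, ?_⟩
    · have : evenE n ⟨b.1 / 2, by have := b.2; omega⟩ = b := Fin.ext (by simp [evenE]; omega)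
      rwa [this]
    · exact Fin.ext (by simp [evenE]; omega)
  · rintro ⟨j, hj, rfl⟩
    exact hj

lemma restrictOdd_isPart (hσ : σ ∈ NC (2 * n)) : IsPart (restrictOdd n σ) := by
  constructor
  · intro C hC
    exact (mem_restrictOdd_iff.1 hC).2
  · intro i
    obtain ⟨B, ⟨hB, hiB⟩, hu⟩ := hσ.2.1 (oddE n i)
    refine ⟨Finset.univ.filter (fun j => oddE n j ∈ B),
      ⟨mem_restrictOdd_iff.2 ⟨⟨B, hB, rfl⟩, ⟨i, by simp [hiB]⟩⟩, by simp [hiB]⟩, ?_⟩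
    rintro C ⟨hC, hiC⟩
    obtain ⟨⟨B', hB', rfl⟩, _⟩ := mem_restrictOdd_iff.1 hC
    simp only [Finset.mem_filter, Finset.mem_univ, true_and] at hiC
    rw [hu B' ⟨hB', hiC⟩]

lemma restrictEven_isPart (hσ : σ ∈ NC (2 * n)) : IsPart (restrictEven n σ) := by
  constructor
  · intro C hC
    exact (mem_restrictEven_iff.1 hC).2
  · intro i
    obtain ⟨B, ⟨hB, hiB⟩, hu⟩ := hσ.2.1 (evenE n i)
    refine ⟨Finset.univ.filter (fun j => evenE n j ∈ B),
      ⟨mem_restrictEven_iff.2 ⟨⟨B, hB, rfl⟩, ⟨i, by simp [hiB]⟩⟩, by simp [hiB]⟩, ?_⟩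
    rintro C ⟨hC, hiC⟩
    obtain ⟨⟨B', hB', rfl⟩, _⟩ := mem_restrictEven_iff.1 hC
    simp only [Finset.mem_filter, Finset.mem_univ, true_and] at hiC
    rw [hu B' ⟨hB', hiC⟩]

lemma restrictOdd_image_mem (hS : SameParity σ) {C : Finset (Fin n)}
    (hC : C ∈ restrictOdd n σ) : C.image (oddE n) ∈ σ := by
  obtain ⟨⟨B, hB, rfl⟩, hne⟩ := mem_restrictOdd_iff.1 hC
  obtain ⟨i, hi⟩ := hne
  simp only [Finset.mem_filter, Finset.mem_univ, true_and] at hi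
  rw [← block_odd_eq hS hB hi]
  exact hB

lemma restrictEven_image_mem (hS : SameParity σ) {C : Finset (Fin n)}
    (hC : C ∈ restrictEven n σ) : C.image (evenE n) ∈ σ := by
  obtain ⟨⟨B, hB, rfl⟩, hne⟩ := mem_restrictEven_iff.1 hC
  obtain ⟨i, hi⟩ := hne
  simp only [Finset.mem_filter, Finset.mem_univ, true_and] at hi
  rw [← block_even_eq hS hB hi]
  exact hB

lemma image_inj_odd {C C' : Finset (Fin n)} (h : C.image (oddE n) = C'.image (oddE n)) :
    C = C' := by
  ext i
  constructor
  · intro hi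
    have : oddE n i ∈ C'.image (oddE n) := h ▸ Finset.mem_image_of_mem _ hi
    obtain ⟨j, hj, hje⟩ := Finset.mem_image.1 this
    rwa [← oddE_inj hje]
  · intro hi
    have : oddE n i ∈ C.image (oddE n) := h.symm ▸ Finset.mem_image_of_mem _ hi
    obtain ⟨j, hj, hje⟩ := Finset.mem_image.1 this
    rwa [← oddE_inj hje]

lemma image_inj_even {C C' : Finset (Fin n)} (h : C.image (evenE n) = C'.image (evenE n)) :
    C = C' := by
  ext i
  constructor
  · intro hi
    have : evenE n i ∈ C'.image (evenE n) := h ▸ Finset.mem_image_of_mem _ hi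
    obtain ⟨j, hj, hje⟩ := Finset.mem_image.1 this
    rwa [← evenE_inj hje]
  · intro hi
    have : evenE n i ∈ C.image (evenE n) := h.symm ▸ Finset.mem_image_of_mem _ hi
    obtain ⟨j, hj, hje⟩ := Finset.mem_image.1 this
    rwa [← evenE_inj hje]

lemma restrictOdd_mem_NC (hσ : σ ∈ NC (2 * n)) (hS : SameParity σ) :
    restrictOdd n σ ∈ NC n := by
  refine ⟨(restrictOdd_isPart hσ).1, (restrictOdd_isPart hσ).2, ?_⟩
  intro C hC C' hC' hne hcross
  have h1 := restrictOdd_image_mem hS hC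
  have h2 := restrictOdd_image_mem hS hC'
  have hne' : C.image (oddE n) ≠ C'.image (oddE n) := fun h => hne (image_inj_odd h)
  exact hσ.2.2 _ h1 _ h2 hne' (crossing_oo.2 hcross)

lemma restrictEven_mem_NC (hσ : σ ∈ NC (2 * n)) (hS : SameParity σ) :
    restrictEven n σ ∈ NC n := by
  refine ⟨(restrictEven_isPart hσ).1, (restrictEven_isPart hσ).2, ?_⟩
  intro C hC C' hC' hne hcross
  have h1 := restrictEven_image_mem hS hC
  have h2 := restrictEven_image_mem hS hC'
  have hne' : C.image (evenE n) ≠ C'.image (evenE n) := fun h => hne (image_inj_even h)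
  exact hσ.2.2 _ h1 _ h2 hne' (crossing_ee.2 hcross)

lemma interlace_restrict_eq (hn : 1 ≤ n) (hσ : σ ∈ NC (2 * n)) (hS : SameParity σ) :
    interlace (restrictOdd n σ) (restrictEven n σ) = σ := by
  ext B
  simp only [interlace, Finset.mem_union, Finset.mem_image]
  constructor
  · rintro (⟨C, hC, rfl⟩ | ⟨C, hC, rfl⟩)
    · exact restrictOdd_image_mem hS hC
    · exact restrictEven_image_mem hS hC
  · intro hB
    obtain ⟨b, hb⟩ := hσ.1 B hB
    rcases Nat.mod_two_eq_zero_or_one b.1 with he | ho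
    · left
      have hbe : b = oddE n ⟨b.1 / 2, by have := b.2; omega⟩ := by
        apply Fin.ext; simp only [oddE]; omega
      have hi : oddE n ⟨b.1 / 2, by have := b.2; omega⟩ ∈ B := hbe ▸ hb
      refine ⟨Finset.univ.filter (fun j => oddE n j ∈ B), ?_, (block_odd_eq hS hB hi).symm⟩
      exact mem_restrictOdd_iff.2 ⟨⟨B, hB, rfl⟩, ⟨⟨b.1 / 2, by have := b.2; omega⟩, by simp [hi]⟩⟩
    · right
      have hbe : b = evenE n ⟨b.1 / 2, by have := b.2; omega⟩ := by
        apply Fin.ext; simp only [evenE]; omega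
      have hi : evenE n ⟨b.1 / 2, by have := b.2; omega⟩ ∈ B := hbe ▸ hb
      refine ⟨Finset.univ.filter (fun j => evenE n j ∈ B), ?_, (block_even_eq hS hB hi).symm⟩
      exact mem_restrictEven_iff.2 ⟨⟨B, hB, rfl⟩, ⟨⟨b.1 / 2, by have := b.2; omega⟩, by simp [hi]⟩⟩

end Restrict
section InterlaceNC

variable {n : ℕ}

lemma interlace_mixed {γ τ : Finset (Finset (Fin n))}
    (h : IsNonCrossing (interlace γ τ))
    (hγn : ∀ A ∈ γ, A.Nonempty) (hτn : ∀ C ∈ τ, C.Nonempty) :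
    ∀ A ∈ γ, ∀ C ∈ τ, ¬ crossOE A C ∧ ¬ crossEO C A := by
  intro A hA C hC
  have hAm : A.image (oddE n) ∈ interlace γ τ :=
    Finset.mem_union_left _ (Finset.mem_image_of_mem _ hA)
  have hCm : C.image (evenE n) ∈ interlace γ τ :=
    Finset.mem_union_right _ (Finset.mem_image_of_mem _ hC)
  have hne : A.image (oddE n) ≠ C.image (evenE n) := by
    intro heq
    obtain ⟨a, ha⟩ := hγn A hA
    have : oddE n a ∈ C.image (evenE n) := heq ▸ Finset.mem_image_of_mem _ ha
    obtain ⟨c, _, hc⟩ := Finset.mem_image.1 this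
    exact oddE_ne_evenE hc.symm
  exact ⟨fun hx => h _ hAm _ hCm hne (crossing_oe.2 hx),
    fun hx => h _ hCm _ hAm hne.symm (crossing_eo.2 hx)⟩

lemma interlace_NC_of {γ τ : Finset (Finset (Fin n))}
    (hγ : ∀ A ∈ γ, ∀ A' ∈ γ, A ≠ A' → ¬ Crossing A A')
    (hτ : ∀ C ∈ τ, ∀ C' ∈ τ, C ≠ C' → ¬ Crossing C C')
    (hmix : ∀ A ∈ γ, ∀ C ∈ τ, ¬ crossOE A C ∧ ¬ crossEO C A) :
    IsNonCrossing (interlace γ τ) := by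
  intro B hB D hD hne
  simp only [interlace, Finset.mem_union, Finset.mem_image] at hB hD
  rcases hB with ⟨A, hA, rfl⟩ | ⟨C, hC, rfl⟩ <;> rcases hD with ⟨A', hA', rfl⟩ | ⟨C', hC', rfl⟩
  · rw [crossing_oo]
    exact hγ A hA A' hA' (fun h => hne (h ▸ rfl))
  · rw [crossing_oe]
    exact (hmix A hA C' hC').1
  · rw [crossing_eo]
    exact (hmix A' hA' C hC).2
  · rw [crossing_ee]
    exact hτ C hC C' hC' (fun h => hne (h ▸ rfl))

end InterlaceNC
section Kreweras

open Relation

variable {n : ℕ}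

/-- x and y can be joined on the bar-level without splitting any block of γ :
no block of γ meets both (min x y, max x y] and its complement. -/
def RK (γ : Finset (Finset (Fin n))) (x y : Fin n) : Prop :=
  ∀ A ∈ γ, (∀ a ∈ A, min x.1 y.1 < a.1 ∧ a.1 ≤ max x.1 y.1) ∨
    (∀ a ∈ A, ¬(min x.1 y.1 < a.1 ∧ a.1 ≤ max x.1 y.1))

lemma RK_refl (γ : Finset (Finset (Fin n))) (x : Fin n) : RK γ x x := by
  intro A hA
  right
  intro a _
  omega

lemma RK_symm {γ : Finset (Finset (Fin n))} {x y : Fin n} (h : RK γ x y) : RK γ y x := by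
  intro A hA
  rcases h A hA with h1 | h1
  · left; intro a ha; have := h1 a ha; omega
  · right; intro a ha; have := h1 a ha; omega

lemma RK_trans {γ : Finset (Finset (Fin n))} {x y z : Fin n}
    (h1 : RK γ x y) (h2 : RK γ y z) : RK γ x z := by
  intro A hA
  rcases h1 A hA with ha | ha <;> rcases h2 A hA with hb | hb
  · right; intro a haA; have := ha a haA; have := hb a haA; omega
  · left; intro a haA; have := ha a haA; have := hb a haA; omega
  · left; intro a haA; have := ha a haA; have := hb a haA; omega
  · right; intro a haA; have := ha a haA; have := hb a haA; omega

/-- any block of a partition compatible with γ has RK-related elements -/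
lemma RK_of_block_aux {γ τ : Finset (Finset (Fin n))}
    (hmix : ∀ A ∈ γ, ∀ C ∈ τ, ¬ crossOE A C ∧ ¬ crossEO C A)
    {C : Finset (Fin n)} (hC : C ∈ τ) {x y : Fin n} (hx : x ∈ C) (hy : y ∈ C)
    (hxy : x.1 ≤ y.1) : RK γ x y := by
  intro A hA
  by_contra hcon
  push_neg at hcon
  obtain ⟨⟨b, hbA, hbS⟩, a, haA, haS⟩ := hcon
  have hbS' : b.1 ≤ x.1 ∨ y.1 < b.1 := by omega
  have haS' : x.1 < a.1 ∧ a.1 ≤ y.1 := by omega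
  rcases hbS' with hb | hb
  · exact (hmix A hA C hC).1 ⟨b, hbA, a, haA, x, hx, y, hy,
      by rw [Fin.le_def]; omega, by rw [Fin.lt_def]; omega, by rw [Fin.le_def]; omega⟩
  · exact (hmix A hA C hC).2 ⟨x, hx, y, hy, a, haA, b, hbA,
      by rw [Fin.lt_def]; omega, by rw [Fin.le_def]; omega, by rw [Fin.lt_def]; omega⟩

lemma RK_of_block {γ τ : Finset (Finset (Fin n))}
    (hmix : ∀ A ∈ γ, ∀ C ∈ τ, ¬ crossOE A C ∧ ¬ crossEO C A)
    {C : Finset (Fin n)} (hC : C ∈ τ) {x y : Fin n} (hx : x ∈ C) (hy : y ∈ C) :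
    RK γ x y := by
  rcases le_total x.1 y.1 with h | h
  · exact RK_of_block_aux hmix hC hx hy h
  · exact RK_symm (RK_of_block_aux hmix hC hy hx h)

/-- set of elements that are the maximum of their block -/
def maxSet (γ : Finset (Finset (Fin n))) : Finset (Fin n) :=
  Finset.univ.filter (fun x => ∀ A ∈ γ, x ∈ A → ∀ b ∈ A, b ≤ x)

/-- set of elements that are the minimum of their block -/
def minSet (δ : Finset (Finset (Fin n))) : Finset (Fin n) :=
  Finset.univ.filter (fun x => ∀ C ∈ δ, x ∈ C → ∀ b ∈ C, x ≤ b)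

lemma card_maxSet {γ : Finset (Finset (Fin n))} (hγ : IsPart γ) :
    (maxSet γ).card = γ.card := by
  symm
  apply Finset.card_bij (fun A hA => A.max' (hγ.1 A hA))
  · intro A hA
    simp only [maxSet, Finset.mem_filter, Finset.mem_univ, true_and]
    intro A' hA' hmem b hb
    have : A = A' := blk_unique hγ hA hA' (A.max'_mem _) hmem
    subst this
    exact A.le_max' b hb
  · intro A hA A' hA' h
    exact blk_unique hγ hA hA' (h ▸ A.max'_mem _) (A'.max'_mem _)
  · intro x hx
    simp only [maxSet, Finset.mem_filter, Finset.mem_univ, true_and] at hx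
    obtain ⟨A, ⟨hA, hxA⟩, _⟩ := hγ.2 x
    refine ⟨A, hA, le_antisymm (A.max'_le _ _ (fun b hb => hx A hA hxA b hb)) (A.le_max' x hxA)⟩

lemma card_minSet {δ : Finset (Finset (Fin n))} (hδ : IsPart δ) :
    (minSet δ).card = δ.card := by
  symm
  apply Finset.card_bij (fun C hC => C.min' (hδ.1 C hC))
  · intro C hC
    simp only [minSet, Finset.mem_filter, Finset.mem_univ, true_and]
    intro C' hC' hmem b hb
    have : C = C' := blk_unique hδ hC hC' (C.min'_mem _) hmem
    subst this
    exact C.min'_le b hb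
  · intro C hC C' hC' h
    exact blk_unique hδ hC hC' (h ▸ C.min'_mem _) (C'.min'_mem _)
  · intro x hx
    simp only [minSet, Finset.mem_filter, Finset.mem_univ, true_and] at hx
    obtain ⟨C, ⟨hC, hxC⟩, _⟩ := hδ.2 x
    refine ⟨C, hC, le_antisymm (C.min'_le x hxC) (Finset.le_min' _ _ _ (fun b hb => hx C hC hxC b hb))⟩

/-- every element is the max of its γ-block or the min of its δ-block -/
lemma maxSet_union_minSet {γ δ : Finset (Finset (Fin n))}
    (hγ : IsPart γ) (hδ : IsPart δ)
    (hmix : ∀ A ∈ γ, ∀ C ∈ δ, ¬ crossOE A C ∧ ¬ crossEO C A) (x : Fin n) :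
    x ∈ maxSet γ ∨ x ∈ minSet δ := by
  by_contra hcon
  push_neg at hcon
  obtain ⟨h1, h2⟩ := hcon
  simp only [maxSet, minSet, Finset.mem_filter, Finset.mem_univ, true_and, not_forall] at h1 h2
  obtain ⟨A, hA, hxA, b, hb, hbx⟩ := h1
  obtain ⟨C, hC, hxC, c, hc, hcx⟩ := h2
  rw [not_le] at hbx hcx
  exact (hmix A hA C hC).2 ⟨c, hc, x, hxC, x, hxA, b, hb, hcx, le_refl x, hbx⟩

/-- set of elements that are minimal in their RK-class -/
noncomputable def kminSet (γ : Finset (Finset (Fin n))) : Finset (Fin n) :=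
  Finset.univ.filter (fun x => ∀ y, RK γ x y → x ≤ y)

lemma maxSet_union_kminSet {γ : Finset (Finset (Fin n))} (x : Fin n) :
    x ∈ maxSet γ ∨ x ∈ kminSet γ := by
  by_contra hcon
  push_neg at hcon
  obtain ⟨h1, h2⟩ := hcon
  simp only [maxSet, kminSet, Finset.mem_filter, Finset.mem_univ, true_and, not_forall] at h1 h2
  obtain ⟨A, hA, hxA, b, hb, hbx⟩ := h1
  obtain ⟨y, hy, hyx⟩ := h2
  rw [not_le] at hbx hyx
  rcases hy A hA with h | h
  · have := h b hb
    have hblt := Fin.lt_def.1 hbx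
    have hylt := Fin.lt_def.1 hyx
    omega
  · have := h x hxA
    have hylt := Fin.lt_def.1 hyx
    omega

lemma exists_max_and_kmin {γ : Finset (Finset (Fin n))} (hn : 1 ≤ n) (hγ : IsPart γ) :
    ∃ x : Fin n, x ∈ maxSet γ ∧ x ∈ kminSet γ := by
  have hlast : (⟨n - 1, by omega⟩ : Fin n) = ⟨n-1, by omega⟩ := rfl
  set last : Fin n := ⟨n - 1, by omega⟩ with hlastdef
  set S : Finset (Fin n) := Finset.univ.filter (fun y => RK γ last y) with hSdef
  have hSne : S.Nonempty := by
    refine ⟨last, ?_⟩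
    simp only [hSdef, Finset.mem_filter, Finset.mem_univ, true_and]
    exact RK_refl γ last
  set x0 : Fin n := S.min' hSne with hx0def
  have hx0S : x0 ∈ S := S.min'_mem hSne
  have hx0RK : RK γ last x0 := by
    have := hx0S
    simp only [hSdef, Finset.mem_filter] at this
    exact this.2
  refine ⟨x0, ?_, ?_⟩
  · -- x0 is the max of its γ-block
    simp only [maxSet, Finset.mem_filter, Finset.mem_univ, true_and]
    intro A hA hmem b hb
    by_contra hbx
    rw [not_le] at hbx
    have hlv : last.1 = n - 1 := rfl
    have hx0last : x0.1 ≤ last.1 := by have := x0.2; omega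
    rcases RK_symm hx0RK A hA with h | h
    · have h1 := h x0 hmem
      rw [Nat.min_eq_left hx0last, Nat.max_eq_right hx0last] at h1
      omega
    · have h1 := h b hb
      rw [Nat.min_eq_left hx0last, Nat.max_eq_right hx0last] at h1
      have h2 := Fin.lt_def.1 hbx
      have h3 := b.2
      omega
  · -- x0 is RK-minimal
    simp only [kminSet, Finset.mem_filter, Finset.mem_univ, true_and]
    intro y hy
    have : y ∈ S := by
      simp only [hSdef, Finset.mem_filter, Finset.mem_univ, true_and]
      exact RK_trans hx0RK hy
    exact S.min'_le y this

end Kreweras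
section M2

open Relation

variable {n : ℕ}

lemma min'_mem_minSet {δ : Finset (Finset (Fin n))} (hδ : IsPart δ)
    {C : Finset (Fin n)} (hC : C ∈ δ) (h : C.Nonempty) : C.min' h ∈ minSet δ := by
  simp only [minSet, Finset.mem_filter, Finset.mem_univ, true_and]
  intro C' hC' hmem b hb
  have : C = C' := blk_unique hδ hC hC' (C.min'_mem h) hmem
  subst this
  exact C.min'_le b hb

lemma M2core (hn : 1 ≤ n) {γ δ τ : Finset (Finset (Fin n))}
    (hγ : IsPart γ) (hδ : IsPart δ) (hτn : ∀ T ∈ τ, T.Nonempty)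
    (hmixδ : ∀ A ∈ γ, ∀ C ∈ δ, ¬ crossOE A C ∧ ¬ crossEO C A)
    (hmixτ : ∀ A ∈ γ, ∀ C ∈ τ, ¬ crossOE A C ∧ ¬ crossEO C A)
    (hconn : ∀ a b : Fin n, EqvGen (fun a b => sameBlk γ a b ∨ sameBlk δ a b) a b) :
    ncle τ δ := by
  -- connectivity bounds the number of components by 1
  have hcomps : (comps (fun a b => sameBlk γ a b ∨ sameBlk δ a b)).card ≤ 1 := by
    have hsub : comps (fun a b => sameBlk γ a b ∨ sameBlk δ a b) ⊆ {Finset.univ} := by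
      intro B hB
      simp only [comps, Finset.mem_image] at hB
      obtain ⟨a, _, rfl⟩ := hB
      rw [Finset.mem_singleton]
      ext x
      simp only [mem_comp, Finset.mem_univ, iff_true]
      exact hconn a x
    calc _ ≤ ({Finset.univ} : Finset (Finset (Fin n))).card := Finset.card_le_card hsub
      _ = 1 := rfl
  have heuler := euler hγ n δ hδ (by omega)
  have hbound : γ.card + δ.card ≤ n + 1 := by omega
  -- max/min counting
  have hu1 : maxSet γ ∪ minSet δ = Finset.univ := by
    ext x
    simp only [Finset.mem_union, Finset.mem_univ, iff_true]
    exact maxSet_union_minSet hγ hδ hmixδ x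
  have hu2 : maxSet γ ∪ kminSet γ = Finset.univ := by
    ext x
    simp only [Finset.mem_union, Finset.mem_univ, iff_true]
    exact maxSet_union_kminSet x
  have hc1 := Finset.card_union_add_card_inter (maxSet γ) (minSet δ)
  have hc2 := Finset.card_union_add_card_inter (maxSet γ) (kminSet γ)
  rw [hu1] at hc1
  rw [hu2] at hc2
  simp only [Finset.card_univ, Fintype.card_fin] at hc1 hc2
  have hint2 : 1 ≤ (maxSet γ ∩ kminSet γ).card := by
    obtain ⟨x, hx1, hx2⟩ := exists_max_and_kmin hn hγ
    exact Finset.card_pos.2 ⟨x, Finset.mem_inter.2 ⟨hx1, hx2⟩⟩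
  have hcm := card_maxSet hγ
  have hcmin := card_minSet hδ
  have hsub : kminSet γ ⊆ minSet δ := by
    intro x hx
    simp only [kminSet, Finset.mem_filter, Finset.mem_univ, true_and] at hx
    simp only [minSet, Finset.mem_filter, Finset.mem_univ, true_and]
    intro C hC hmem b hb
    exact hx b (RK_of_block hmixδ hC hmem hb)
  have hcle := Finset.card_le_card hsub
  have hminint : (maxSet γ ∩ minSet δ).card ≤ 1 := by omega
  have heq : kminSet γ = minSet δ :=
    Finset.eq_of_subset_of_card_le hsub (by omega)
  -- conclude
  intro T hT
  obtain ⟨x, hx⟩ := hτn T hT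
  obtain ⟨C, ⟨hC, hxC⟩, _⟩ := hδ.2 x
  refine ⟨C, hC, ?_⟩
  intro y hy
  obtain ⟨Cy, ⟨hCy, hyCy⟩, _⟩ := hδ.2 y
  have hCne := hδ.1 C hC
  have hCyne := hδ.1 Cy hCy
  have hc : C.min' hCne ∈ kminSet γ := heq ▸ min'_mem_minSet hδ hC hCne
  have hd : Cy.min' hCyne ∈ kminSet γ := heq ▸ min'_mem_minSet hδ hCy hCyne
  simp only [kminSet, Finset.mem_filter, Finset.mem_univ, true_and] at hc hd
  have h1 : RK γ (C.min' hCne) x := RK_of_block hmixδ hC (C.min'_mem _) hxC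
  have h2 : RK γ x y := RK_of_block hmixτ hT hx hy
  have h3 : RK γ y (Cy.min' hCyne) := RK_of_block hmixδ hCy hyCy (Cy.min'_mem _)
  have hcd : RK γ (C.min' hCne) (Cy.min' hCyne) := RK_trans (RK_trans h1 h2) h3
  have hle1 := hc _ hcd
  have hle2 := hd _ (RK_symm hcd)
  have hmineq : C.min' hCne = Cy.min' hCyne := le_antisymm hle1 hle2
  have hCeq : C = Cy := blk_unique hδ hC hCy (C.min'_mem _) (hmineq ▸ Cy.min'_mem _)
  rw [hCeq]
  exact hyCy

end M2
section Conn

open Relation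

variable {n : ℕ} {σ : Finset (Finset (Fin (2 * n)))}

lemma zeroHat_no_cross_left {i : Fin n} {D : Finset (Fin (2 * n))} :
    ¬ Crossing ({oddE n i, evenE n i} : Finset (Fin (2 * n))) D := by
  rintro ⟨a, ha, p, hp, k, _, q, _, h1, h2, _⟩
  simp only [Finset.mem_insert, Finset.mem_singleton] at ha hp
  have e1 : a.1 = 2 * i.1 ∨ a.1 = 2 * i.1 + 1 := by
    rcases ha with rfl | rfl
    · left; rfl
    · right; rfl
  have e2 : p.1 = 2 * i.1 ∨ p.1 = 2 * i.1 + 1 := by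
    rcases hp with rfl | rfl
    · left; rfl
    · right; rfl
  have l1 := Fin.lt_def.1 h1
  have l2 := Fin.lt_def.1 h2
  omega

lemma zeroHat_no_cross_right {i : Fin n} {D : Finset (Fin (2 * n))} :
    ¬ Crossing D ({oddE n i, evenE n i} : Finset (Fin (2 * n))) := by
  rintro ⟨a, _, p, _, k, hk, q, hq, h1, h2, h3⟩
  simp only [Finset.mem_insert, Finset.mem_singleton] at hk hq
  have e1 : k.1 = 2 * i.1 ∨ k.1 = 2 * i.1 + 1 := by
    rcases hk with rfl | rfl
    · left; rfl
    · right; rfl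
  have e2 : q.1 = 2 * i.1 ∨ q.1 = 2 * i.1 + 1 := by
    rcases hq with rfl | rfl
    · left; rfl
    · right; rfl
  have l1 := Fin.lt_def.1 h1
  have l2 := Fin.lt_def.1 h2
  have l3 := Fin.lt_def.1 h3
  omega

lemma pairwise_F (hσ : σ ∈ NC (2 * n)) :
    ∀ B ∈ σ ∪ zeroHat n, ∀ D ∈ σ ∪ zeroHat n, B ≠ D → ¬ Crossing B D := by
  intro B hB D hD hne
  rcases Finset.mem_union.1 hB with hB' | hB'
  · rcases Finset.mem_union.1 hD with hD' | hD'
    · exact hσ.2.2 B hB' D hD' hne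
    · simp only [zeroHat, Finset.mem_image] at hD'
      obtain ⟨i, _, rfl⟩ := hD'
      exact zeroHat_no_cross_right
  · simp only [zeroHat, Finset.mem_image] at hB'
    obtain ⟨i, _, rfl⟩ := hB'
    exact zeroHat_no_cross_left

/-- connectivity on the doubled level transfers to the restricted level. -/
lemma conn_transfer (hσ : σ ∈ NC (2 * n)) (hS : SameParity σ) {x y : Fin (2 * n)}
    (h : EqvGen (sameBlk (σ ∪ zeroHat n)) x y) :
    EqvGen (fun a b => sameBlk (restrictOdd n σ) a b ∨ sameBlk (restrictEven n σ) a b)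
      (⟨x.1 / 2, by have := x.2; omega⟩ : Fin n) ⟨y.1 / 2, by have := y.2; omega⟩ := by
  induction h with
  | rel a b hab =>
      obtain ⟨B, hB, ha, hb⟩ := hab
      rcases Finset.mem_union.1 hB with hB' | hB'
      · rcases Nat.mod_two_eq_zero_or_one a.1 with hpar | hpar
        · -- odd positions (values 2i) : gamma
          have hae : a = oddE n ⟨a.1 / 2, by have := a.2; omega⟩ := Fin.ext (by simp [oddE]; omega)
          have hbpar : b.1 % 2 = 0 := by
            have := hS B hB' a ha b hb; omega
          have hbe : b = oddE n ⟨b.1 / 2, by have := b.2; omega⟩ := Fin.ext (by simp [oddE]; omega)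
          apply EqvGen.rel
          left
          have hmemA : (⟨a.1 / 2, by have := a.2; omega⟩ : Fin n) ∈
              Finset.univ.filter (fun j => oddE n j ∈ B) := by
            simp only [Finset.mem_filter, Finset.mem_univ, true_and]
            exact hae ▸ ha
          have hmemB : (⟨b.1 / 2, by have := b.2; omega⟩ : Fin n) ∈
              Finset.univ.filter (fun j => oddE n j ∈ B) := by
            simp only [Finset.mem_filter, Finset.mem_univ, true_and]
            exact hbe ▸ hb
          exact ⟨Finset.univ.filter (fun j => oddE n j ∈ B),
            mem_restrictOdd_iff.2 ⟨⟨B, hB', rfl⟩, ⟨_, hmemA⟩⟩, hmemA, hmemB⟩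
        · -- even positions (values 2i+1) : delta
          have hae : a = evenE n ⟨a.1 / 2, by have := a.2; omega⟩ := Fin.ext (by simp [evenE]; omega)
          have hbpar : b.1 % 2 = 1 := by
            have := hS B hB' a ha b hb; omega
          have hbe : b = evenE n ⟨b.1 / 2, by have := b.2; omega⟩ := Fin.ext (by simp [evenE]; omega)
          apply EqvGen.rel
          right
          have hmemA : (⟨a.1 / 2, by have := a.2; omega⟩ : Fin n) ∈
              Finset.univ.filter (fun j => evenE n j ∈ B) := by
            simp only [Finset.mem_filter, Finset.mem_univ, true_and]
            exact hae ▸ ha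
          have hmemB : (⟨b.1 / 2, by have := b.2; omega⟩ : Fin n) ∈
              Finset.univ.filter (fun j => evenE n j ∈ B) := by
            simp only [Finset.mem_filter, Finset.mem_univ, true_and]
            exact hbe ▸ hb
          exact ⟨Finset.univ.filter (fun j => evenE n j ∈ B),
            mem_restrictEven_iff.2 ⟨⟨B, hB', rfl⟩, ⟨_, hmemA⟩⟩, hmemA, hmemB⟩
      · -- a zeroHat pair : equal halves
        simp only [zeroHat, Finset.mem_image] at hB'
        obtain ⟨i, _, rfl⟩ := hB'
        simp only [Finset.mem_insert, Finset.mem_singleton] at ha hb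
        have hval : a.1 / 2 = b.1 / 2 := by
          have e1 : a.1 = 2 * i.1 ∨ a.1 = 2 * i.1 + 1 := by
            rcases ha with rfl | rfl
            · left; rfl
            · right; rfl
          have e2 : b.1 = 2 * i.1 ∨ b.1 = 2 * i.1 + 1 := by
            rcases hb with rfl | rfl
            · left; rfl
            · right; rfl
          omega
        have : (⟨a.1 / 2, by have := a.2; omega⟩ : Fin n) = ⟨b.1 / 2, by have := b.2; omega⟩ :=
          Fin.ext hval
        rw [this]
        exact EqvGen.refl _
  | refl a => exact EqvGen.refl _
  | symm a b _ ih => exact ih.symm _ _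
  | trans a b c _ _ ih1 ih2 => exact ih1.trans _ _ _ ih2

end Conn
section M1cases

variable {n : ℕ}

lemma m1_mixed {γ δ : Finset (Finset (Fin n))} {C1 C2 : Finset (Fin n)} {a b : ℕ}
    {am1 bb : Fin n}
    (hC1δ : C1 ∈ δ) (hC2δ : C2 ∈ δ)
    (hmixδ : ∀ A ∈ γ, ∀ C ∈ δ, ¬ crossOE A C ∧ ¬ crossEO C A)
    (hC1 : ∀ c ∈ C1, c.1 < a ∨ b < c.1) (hC2 : ∀ c ∈ C2, a ≤ c.1 ∧ c.1 ≤ b)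
    (ham1 : am1 ∈ C1) (ham1v : am1.1 + 1 = a) (hbb : bb ∈ C2) (hbbv : bb.1 = b)
    (hdichA : ∀ A ∈ γ, ∀ e ∈ A, a ≤ e.1 → e.1 ≤ b → ∀ f ∈ A, a ≤ f.1 ∧ f.1 ≤ b) :
    ∀ A ∈ γ, ¬ crossOE A (C1 ∪ C2) ∧ ¬ crossEO (C1 ∪ C2) A := by
  intro A hA
  constructor
  · rintro ⟨i, hi, p, hp, k, hk, q, hq, h1, h2, h3⟩
    have v1 := Fin.le_def.1 h1
    have v2 := Fin.lt_def.1 h2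
    have v3 := Fin.le_def.1 h3
    rcases Finset.mem_union.1 hk with hk' | hk' <;> rcases Finset.mem_union.1 hq with hq' | hq'
    · exact (hmixδ A hA C1 hC1δ).1 ⟨i, hi, p, hp, k, hk', q, hq', h1, h2, h3⟩
    · -- k ∈ C1, q ∈ C2
      have hkr := hC1 k hk'
      have hqr := hC2 q hq'
      have hka : k.1 < a := by omega
      by_cases hpa : a ≤ p.1
      · have := hdichA A hA p hp hpa (by omega) i hi
        omega
      · exact (hmixδ A hA C1 hC1δ).1 ⟨i, hi, p, hp, k, hk', am1, ham1, h1, h2,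
          by rw [Fin.le_def]; omega⟩
    · -- k ∈ C2, q ∈ C1
      have hkr := hC2 k hk'
      have hqr := hC1 q hq'
      have hqb : b < q.1 := by omega
      by_cases hpb : p.1 ≤ b
      · have hall := hdichA A hA p hp (by omega) hpb
        exact (hmixδ A hA C2 hC2δ).1 ⟨i, hi, p, hp, k, hk', bb, hbb, h1, h2,
          by rw [Fin.le_def]; omega⟩
      · have := hdichA A hA
        have hiout : i.1 < a := by
          by_contra hcon
          push_neg at hcon
          have := hdichA A hA i hi hcon (by omega) p hp
          omega
        exact (hmixδ A hA C1 hC1δ).1 ⟨i, hi, p, hp, am1, ham1, q, hq',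
          by rw [Fin.le_def]; omega, by rw [Fin.lt_def]; omega, h3⟩
    · exact (hmixδ A hA C2 hC2δ).1 ⟨i, hi, p, hp, k, hk', q, hq', h1, h2, h3⟩
  · rintro ⟨i, hi, p, hp, k, hk, q, hq, h1, h2, h3⟩
    have v1 := Fin.lt_def.1 h1
    have v2 := Fin.le_def.1 h2
    have v3 := Fin.lt_def.1 h3
    rcases Finset.mem_union.1 hi with hi' | hi' <;> rcases Finset.mem_union.1 hp with hp' | hp'
    · exact (hmixδ A hA C1 hC1δ).2 ⟨i, hi', p, hp', k, hk, q, hq, h1, h2, h3⟩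
    · -- i ∈ C1, p ∈ C2
      have hir := hC1 i hi'
      have hpr := hC2 p hp'
      have hia : i.1 < a := by omega
      by_cases hka : a ≤ k.1
      · have hall := hdichA A hA k hk hka (by omega) q hq
        exact (hmixδ A hA C2 hC2δ).1 ⟨k, hk, q, hq, p, hp', bb, hbb,
          h2, h3, by rw [Fin.le_def]; omega⟩
      · have hqout : b < q.1 := by
          by_contra hcon
          push_neg at hcon
          have := hdichA A hA q hq (by omega) hcon k hk
          omega
        exact (hmixδ A hA C1 hC1δ).2 ⟨i, hi', am1, ham1, k, hk, q, hq,
          h1, by rw [Fin.le_def]; omega, by rw [Fin.lt_def]; omega⟩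
    · -- i ∈ C2, p ∈ C1
      have hir := hC2 i hi'
      have hpr := hC1 p hp'
      have hpb : b < p.1 := by omega
      by_cases hkb : k.1 ≤ b
      · have := hdichA A hA k hk (by omega) hkb q hq
        omega
      · exact (hmixδ A hA C1 hC1δ).2 ⟨am1, ham1, p, hp', k, hk, q, hq,
          by rw [Fin.lt_def]; omega, h2, h3⟩
    · exact (hmixδ A hA C2 hC2δ).2 ⟨i, hi', p, hp', k, hk, q, hq, h1, h2, h3⟩

lemma m1_plain {δ : Finset (Finset (Fin n))} {C1 C2 : Finset (Fin n)} {a b : ℕ}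
    {am1 bb : Fin n}
    (hδp : IsPart δ) (hδNC : ∀ B ∈ δ, ∀ D ∈ δ, B ≠ D → ¬ Crossing B D)
    (hC1δ : C1 ∈ δ) (hC2δ : C2 ∈ δ)
    (hC1 : ∀ c ∈ C1, c.1 < a ∨ b < c.1) (hC2 : ∀ c ∈ C2, a ≤ c.1 ∧ c.1 ≤ b)
    (ham1 : am1 ∈ C1) (ham1v : am1.1 + 1 = a) (hbb : bb ∈ C2) (hbbv : bb.1 = b)
    (hdichD : ∀ D ∈ δ, ∀ e ∈ D, a ≤ e.1 → e.1 ≤ b → ∀ f ∈ D, a ≤ f.1 ∧ f.1 ≤ b) :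
    ∀ D ∈ δ, D ≠ C1 → D ≠ C2 → ¬ Crossing (C1 ∪ C2) D ∧ ¬ Crossing D (C1 ∪ C2) := by
  intro D hD hD1 hD2
  constructor
  · rintro ⟨i, hi, p, hp, k, hk, q, hq, h1, h2, h3⟩
    have v1 := Fin.lt_def.1 h1
    have v2 := Fin.lt_def.1 h2
    have v3 := Fin.lt_def.1 h3
    rcases Finset.mem_union.1 hi with hi' | hi' <;> rcases Finset.mem_union.1 hp with hp' | hp'
    · exact hδNC C1 hC1δ D hD hD1.symm ⟨i, hi', p, hp', k, hk, q, hq, h1, h2, h3⟩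
    · -- i ∈ C1, p ∈ C2
      have hir := hC1 i hi'
      have hpr := hC2 p hp'
      have hia : i.1 < a := by omega
      by_cases hka : a ≤ k.1
      · have hall := hdichD D hD k hk hka (by omega) q hq
        have hqbb : q ≠ bb := fun h => blk_disj hδp hD hC2δ hD2 hq (h ▸ hbb)
        have hqv : q.1 ≠ bb.1 := fun h => hqbb (Fin.ext h)
        exact hδNC D hD C2 hC2δ hD2 ⟨k, hk, q, hq, p, hp', bb, hbb, h2, h3,
          by rw [Fin.lt_def]; omega⟩
      · have hqout : b < q.1 := by
          by_contra hcon
          push_neg at hcon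
          have := hdichD D hD q hq (by omega) hcon k hk
          omega
        have hkam1 : k ≠ am1 := fun h => blk_disj hδp hD hC1δ hD1 hk (h ▸ ham1)
        have hkv : k.1 ≠ am1.1 := fun h => hkam1 (Fin.ext h)
        exact hδNC C1 hC1δ D hD hD1.symm ⟨i, hi', am1, ham1, k, hk, q, hq,
          h1, by rw [Fin.lt_def]; omega, by rw [Fin.lt_def]; omega⟩
    · -- i ∈ C2, p ∈ C1
      have hir := hC2 i hi'
      have hpr := hC1 p hp'
      have hpb : b < p.1 := by omega
      by_cases hkb : k.1 ≤ b
      · have := hdichD D hD k hk (by omega) hkb q hq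
        omega
      · exact hδNC C1 hC1δ D hD hD1.symm ⟨am1, ham1, p, hp', k, hk, q, hq,
          by rw [Fin.lt_def]; omega, h2, h3⟩
    · exact hδNC C2 hC2δ D hD hD2.symm ⟨i, hi', p, hp', k, hk, q, hq, h1, h2, h3⟩
  · rintro ⟨i, hi, p, hp, k, hk, q, hq, h1, h2, h3⟩
    have v1 := Fin.lt_def.1 h1
    have v2 := Fin.lt_def.1 h2
    have v3 := Fin.lt_def.1 h3
    rcases Finset.mem_union.1 hk with hk' | hk' <;> rcases Finset.mem_union.1 hq with hq' | hq'
    · exact hδNC D hD C1 hC1δ hD1 ⟨i, hi, p, hp, k, hk', q, hq', h1, h2, h3⟩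
    · -- k ∈ C1, q ∈ C2
      have hkr := hC1 k hk'
      have hqr := hC2 q hq'
      have hka : k.1 < a := by omega
      by_cases hpa : a ≤ p.1
      · have := hdichD D hD p hp hpa (by omega) i hi
        omega
      · have hpam1 : p ≠ am1 := fun h => blk_disj hδp hD hC1δ hD1 hp (h ▸ ham1)
        have hpv : p.1 ≠ am1.1 := fun h => hpam1 (Fin.ext h)
        exact hδNC D hD C1 hC1δ hD1 ⟨i, hi, p, hp, k, hk', am1, ham1, h1, h2,
          by rw [Fin.lt_def]; omega⟩
    · -- k ∈ C2, q ∈ C1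
      have hkr := hC2 k hk'
      have hqr := hC1 q hq'
      have hqb : b < q.1 := by omega
      by_cases hpb : p.1 ≤ b
      · have hall := hdichD D hD p hp (by omega) hpb
        have hpbb : p ≠ bb := fun h => blk_disj hδp hD hC2δ hD2 hp (h ▸ hbb)
        have hpv : p.1 ≠ bb.1 := fun h => hpbb (Fin.ext h)
        exact hδNC D hD C2 hC2δ hD2 ⟨i, hi, p, hp, k, hk', bb, hbb, h1, h2,
          by rw [Fin.lt_def]; omega⟩
      · have hiout : i.1 < a := by
          by_contra hcon
          push_neg at hcon
          have := hdichD D hD i hi hcon (by omega) p hp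
          omega
        have hiam1 : i ≠ am1 := fun h => blk_disj hδp hD hC1δ hD1 hi (h ▸ ham1)
        have hiv : i.1 ≠ am1.1 := fun h => hiam1 (Fin.ext h)
        exact hδNC D hD C1 hC1δ hD1 ⟨i, hi, p, hp, am1, ham1, q, hq',
          by rw [Fin.lt_def]; omega, by rw [Fin.lt_def]; omega, h3⟩
    · exact hδNC D hD C2 hC2δ hD2 ⟨i, hi, p, hp, k, hk', q, hq', h1, h2, h3⟩

end M1cases
section M1main

variable {n : ℕ}

lemma exists_interval_block (hn : 1 ≤ n) {ρ : Finset (Finset (Fin (2 * n)))}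
    (hρ : ρ ∈ NC (2 * n)) (h0 : ncle (zeroHat n) ρ)
    (hnu : ¬ ∃ D ∈ ρ, Finset.univ ⊆ D) :
    ∃ B ∈ ρ, ∃ a b : ℕ, 1 ≤ a ∧ a ≤ b ∧ b < n ∧
      (∀ z : Fin (2 * n), z ∈ B ↔ (2 * a ≤ z.1 ∧ z.1 ≤ 2 * b + 1)) := by
  have hP : IsPart ρ := ⟨hρ.1, hρ.2.1⟩
  set z0 : Fin (2 * n) := ⟨0, by omega⟩ with hz0def
  have hz0v : z0.1 = 0 := rfl
  obtain ⟨B0, ⟨hB0, hz0B0⟩, _⟩ := hρ.2.1 z0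
  have hnotall : ¬ Finset.univ ⊆ B0 := fun h => hnu ⟨B0, hB0, h⟩
  obtain ⟨w, _, hw⟩ := Finset.not_subset.1 hnotall
  obtain ⟨Bw, ⟨hBw, hwBw⟩, _⟩ := hρ.2.1 w
  have hz0Bw : z0 ∉ Bw := by
    intro h
    have : Bw = B0 := blk_unique hP hBw hB0 h hz0B0
    exact hw (this ▸ hwBw)
  set G := ρ.filter (fun B => z0 ∉ B) with hGdef
  have hG : G.Nonempty := ⟨Bw, Finset.mem_filter.2 ⟨hBw, hz0Bw⟩⟩
  set f : Finset (Fin (2 * n)) → ℕ :=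
    fun B => if h : B.Nonempty then (B.max' h).1 - (B.min' h).1 else 0 with hfdef
  obtain ⟨B, hBG, hminf⟩ := Finset.exists_min_image G f hG
  have hBρ : B ∈ ρ := (Finset.mem_filter.1 hBG).1
  have hz0B : z0 ∉ B := (Finset.mem_filter.1 hBG).2
  have hBne : B.Nonempty := hρ.1 B hBρ
  set mn := B.min' hBne with hmndef
  set mx := B.max' hBne with hmxdef
  have hmnB : mn ∈ B := B.min'_mem hBne
  have hmxB : mx ∈ B := B.max'_mem hBne
  have hmn1 : 1 ≤ mn.1 := by
    rcases Nat.eq_zero_or_pos mn.1 with h | h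
    · exfalso; apply hz0B
      have : mn = z0 := Fin.ext (by omega)
      exact this ▸ hmnB
    · exact h
  have hfB : f B = mx.1 - mn.1 := by rw [hfdef]; simp [hBne]; rfl
  -- no gaps
  have hgap : ∀ z : Fin (2 * n), mn.1 ≤ z.1 → z.1 ≤ mx.1 → z ∈ B := by
    intro z hz1 hz2
    by_contra hzB
    obtain ⟨D, ⟨hD, hzD⟩, _⟩ := hρ.2.1 z
    have hDB : D ≠ B := fun h => hzB (h ▸ hzD)
    have hzmn : mn.1 < z.1 := by
      rcases Nat.lt_or_ge mn.1 z.1 with h | h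
      · exact h
      · exfalso; apply hzB
        have : z = mn := Fin.ext (by omega)
        exact this ▸ hmnB
    have hzmx : z.1 < mx.1 := by
      rcases Nat.lt_or_ge z.1 mx.1 with h | h
      · exact h
      · exfalso; apply hzB
        have : z = mx := Fin.ext (by omega)
        exact this ▸ hmxB
    by_cases hz0D : z0 ∈ D
    · exact hρ.2.2 D hD B hBρ hDB ⟨z0, hz0D, z, hzD, mn, hmnB, mx, hmxB,
        by rw [Fin.lt_def]; omega, by rw [Fin.lt_def]; omega, by rw [Fin.lt_def]; omega⟩
    · have hDG : D ∈ G := Finset.mem_filter.2 ⟨hD, hz0D⟩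
      have hDne : D.Nonempty := hρ.1 D hD
      have hDin : ∀ d ∈ D, mn.1 < d.1 ∧ d.1 < mx.1 := by
        intro d hd
        have hdmn : d ≠ mn := fun h => blk_disj hP hD hBρ hDB hd (h ▸ hmnB)
        have hdmx : d ≠ mx := fun h => blk_disj hP hD hBρ hDB hd (h ▸ hmxB)
        have hvmn : d.1 ≠ mn.1 := fun h => hdmn (Fin.ext h)
        have hvmx : d.1 ≠ mx.1 := fun h => hdmx (Fin.ext h)
        constructor
        · rcases Nat.lt_or_ge mn.1 d.1 with h | h
          · exact h
          · exfalso
            exact hρ.2.2 D hD B hBρ hDB ⟨d, hd, z, hzD, mn, hmnB, mx, hmxB,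
              by rw [Fin.lt_def]; omega, by rw [Fin.lt_def]; omega, by rw [Fin.lt_def]; omega⟩
        · rcases Nat.lt_or_ge d.1 mx.1 with h | h
          · exact h
          · exfalso
            exact hρ.2.2 B hBρ D hD hDB.symm ⟨mn, hmnB, mx, hmxB, z, hzD, d, hd,
              by rw [Fin.lt_def]; omega, by rw [Fin.lt_def]; omega, by rw [Fin.lt_def]; omega⟩
      have hfD : f D = (D.max' hDne).1 - (D.min' hDne).1 := by rw [hfdef]; simp [hDne]
      have h1 := hDin (D.max' hDne) (D.max'_mem hDne)
      have h2 := hDin (D.min' hDne) (D.min'_mem hDne)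
      have h3 : (D.min' hDne).1 ≤ (D.max' hDne).1 :=
        Fin.le_def.1 (D.min'_le _ (D.max'_mem hDne))
      have := hminf D hDG
      omega
  -- parity of the endpoints
  have hseven : mn.1 % 2 = 0 := by
    by_contra hodd
    have hodd' : mn.1 % 2 = 1 := by omega
    set i : Fin n := ⟨mn.1 / 2, by have := mn.2; omega⟩ with hidef
    obtain ⟨E, hE, hPE⟩ := h0 ({oddE n i, evenE n i})
      (Finset.mem_image_of_mem _ (Finset.mem_univ i))
    have hevE : evenE n i = mn := Fin.ext (by simp only [evenE, hidef, Fin.val_mk]; omega)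
    have hmnE : mn ∈ E := hevE ▸ hPE (Finset.mem_insert_of_mem (Finset.mem_singleton_self _))
    have hEB : E = B := blk_unique hP hE hBρ hmnE hmnB
    have hoB : oddE n i ∈ B := hEB ▸ hPE (Finset.mem_insert_self _ _)
    have := Fin.le_def.1 (B.min'_le _ hoB)
    simp only [oddE, hidef, Fin.val_mk] at this
    omega
  have htodd : mx.1 % 2 = 1 := by
    by_contra hev
    have hev' : mx.1 % 2 = 0 := by omega
    set i : Fin n := ⟨mx.1 / 2, by have := mx.2; omega⟩ with hidef
    obtain ⟨E, hE, hPE⟩ := h0 ({oddE n i, evenE n i})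
      (Finset.mem_image_of_mem _ (Finset.mem_univ i))
    have hodE : oddE n i = mx := Fin.ext (by simp only [oddE, hidef, Fin.val_mk]; omega)
    have hmxE : mx ∈ E := hodE ▸ hPE (Finset.mem_insert_self _ _)
    have hEB : E = B := blk_unique hP hE hBρ hmxE hmxB
    have heB : evenE n i ∈ B := hEB ▸ hPE (Finset.mem_insert_of_mem (Finset.mem_singleton_self _))
    have := Fin.le_def.1 (B.le_max' _ heB)
    simp only [evenE, hidef, Fin.val_mk] at this
    omega
  refine ⟨B, hBρ, mn.1 / 2, (mx.1 - 1) / 2, by omega, ?_, ?_, ?_⟩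
  · have := Fin.le_def.1 (B.min'_le _ hmxB)
    omega
  · have := mx.2
    omega
  · intro z
    constructor
    · intro hz
      have h1 := Fin.le_def.1 (B.min'_le _ hz)
      have h2 := Fin.le_def.1 (B.le_max' _ hz)
      omega
    · intro ⟨h1, h2⟩
      exact hgap z (by omega) (by omega)

end M1main
section M1assemble

variable {n : ℕ} {σ : Finset (Finset (Fin (2 * n)))}

lemma M1core (hn : 1 ≤ n) (hσ : σ ∈ NC (2 * n)) (hS : SameParity σ)
    (hmax : ∀ τ ∈ NC n, IsNonCrossing (interlace (restrictOdd n σ) τ) →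
      ncle τ (restrictEven n σ)) :
    ∀ ρ ∈ NC (2 * n), ncle σ ρ → ncle (zeroHat n) ρ → ∃ D ∈ ρ, Finset.univ ⊆ D := by
  intro ρ hρ hsle h0le
  by_contra hnu
  obtain ⟨B, hBρ, a, b, ha1, hab, hbn, hmem⟩ := exists_interval_block hn hρ h0le hnu
  have hρP : IsPart ρ := ⟨hρ.1, hρ.2.1⟩
  set γ := restrictOdd n σ with hγdef
  set δ := restrictEven n σ with hδdef
  have hγP : IsPart γ := restrictOdd_isPart hσ
  have hδP : IsPart δ := restrictEven_isPart hσ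
  have hγNC := (restrictOdd_mem_NC hσ hS).2.2
  have hδNC := (restrictEven_mem_NC hσ hS).2.2
  have hINC : IsNonCrossing (interlace γ δ) := by
    rw [hγdef, hδdef, interlace_restrict_eq hn hσ hS]; exact hσ.2.2
  have hmixδ := interlace_mixed hINC hγP.1 hδP.1
  -- dichotomy for δ blocks
  have hdichD : ∀ D ∈ δ, ∀ e ∈ D, a ≤ e.1 → e.1 ≤ b →
      ∀ f ∈ D, a ≤ f.1 ∧ f.1 ≤ b := by
    intro D hD e he hea heb f hf
    obtain ⟨E, hE, himg⟩ := hsle (D.image (evenE n)) (restrictEven_image_mem hS hD)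
    have heE : evenE n e ∈ E := himg (Finset.mem_image_of_mem _ he)
    have heB : evenE n e ∈ B := (hmem _).2 (by simp only [evenE]; omega)
    have hEB : E = B := blk_unique hρP hE hBρ heE heB
    have hfB : evenE n f ∈ B := hEB ▸ himg (Finset.mem_image_of_mem _ hf)
    have := (hmem _).1 hfB
    simp only [evenE] at this
    omega
  -- dichotomy for γ blocks
  have hdichA : ∀ A ∈ γ, ∀ e ∈ A, a ≤ e.1 → e.1 ≤ b →
      ∀ f ∈ A, a ≤ f.1 ∧ f.1 ≤ b := by
    intro A hA e he hea heb f hf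
    obtain ⟨E, hE, himg⟩ := hsle (A.image (oddE n)) (restrictOdd_image_mem hS hA)
    have heE : oddE n e ∈ E := himg (Finset.mem_image_of_mem _ he)
    have heB : oddE n e ∈ B := (hmem _).2 (by simp only [oddE]; omega)
    have hEB : E = B := blk_unique hρP hE hBρ heE heB
    have hfB : oddE n f ∈ B := hEB ▸ himg (Finset.mem_image_of_mem _ hf)
    have := (hmem _).1 hfB
    simp only [oddE] at this
    omega
  set am1 : Fin n := ⟨a - 1, by omega⟩ with ham1def
  set bb : Fin n := ⟨b, by omega⟩ with hbbdef
  have ham1v : am1.1 + 1 = a := by simp only [ham1def]; omega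
  have hbbv : bb.1 = b := rfl
  obtain ⟨C1, ⟨hC1δ, ham1mem⟩, _⟩ := hδP.2 am1
  obtain ⟨C2, ⟨hC2δ, hbbmem⟩, _⟩ := hδP.2 bb
  have hC2sub : ∀ c ∈ C2, a ≤ c.1 ∧ c.1 ≤ b :=
    hdichD C2 hC2δ bb hbbmem (by omega) (by omega)
  have hC1sub : ∀ c ∈ C1, c.1 < a ∨ b < c.1 := by
    intro c hc
    by_contra hcon
    push_neg at hcon
    have := hdichD C1 hC1δ c hc (by omega) (by omega) am1 ham1mem
    omega
  have hne12 : C1 ≠ C2 := by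
    intro h
    have := hC2sub am1 (h ▸ ham1mem)
    omega
  set τ : Finset (Finset (Fin n)) := insert (C1 ∪ C2) ((δ.erase C1).erase C2) with hτdef
  have hold : ∀ D ∈ (δ.erase C1).erase C2, D ∈ δ ∧ D ≠ C1 ∧ D ≠ C2 := by
    intro D hD
    exact ⟨Finset.mem_of_mem_erase (Finset.mem_of_mem_erase hD),
      Finset.ne_of_mem_erase (Finset.mem_of_mem_erase hD), Finset.ne_of_mem_erase hD⟩
  have holdmem : ∀ D ∈ δ, D ≠ C1 → D ≠ C2 → D ∈ (δ.erase C1).erase C2 := by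
    intro D hD h1 h2
    exact Finset.mem_erase.2 ⟨h2, Finset.mem_erase.2 ⟨h1, hD⟩⟩
  -- τ is a partition
  have hτP : IsPart τ := by
    constructor
    · intro T hT
      rcases Finset.mem_insert.1 hT with rfl | hT
      · exact ⟨bb, Finset.mem_union_right _ hbbmem⟩
      · exact hδP.1 T (hold T hT).1
    · intro x
      by_cases hx : x ∈ C1 ∪ C2
      · refine ⟨C1 ∪ C2, ⟨Finset.mem_insert_self _ _, hx⟩, ?_⟩
        rintro T ⟨hT, hxT⟩
        rcases Finset.mem_insert.1 hT with rfl | hT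
        · rfl
        · exfalso
          obtain ⟨hTδ, hT1, hT2⟩ := hold T hT
          rcases Finset.mem_union.1 hx with h | h
          · exact hT1 (blk_unique hδP hTδ hC1δ hxT h)
          · exact hT2 (blk_unique hδP hTδ hC2δ hxT h)
      · obtain ⟨Dx, ⟨hDx, hxDx⟩, _⟩ := hδP.2 x
        have h1 : Dx ≠ C1 := fun h => hx (Finset.mem_union_left _ (h ▸ hxDx))
        have h2 : Dx ≠ C2 := fun h => hx (Finset.mem_union_right _ (h ▸ hxDx))
        refine ⟨Dx, ⟨Finset.mem_insert_of_mem (holdmem Dx hDx h1 h2), hxDx⟩, ?_⟩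
        rintro T ⟨hT, hxT⟩
        rcases Finset.mem_insert.1 hT with rfl | hT
        · exact absurd hxT hx
        · exact blk_unique hδP (hold T hT).1 hDx hxT hxDx
  -- τ is noncrossing
  have hτNC : ∀ T ∈ τ, ∀ T' ∈ τ, T ≠ T' → ¬ Crossing T T' := by
    intro T hT T' hT' hne
    rcases Finset.mem_insert.1 hT with rfl | hT
    · rcases Finset.mem_insert.1 hT' with rfl | hT'
      · exact absurd rfl hne
      · obtain ⟨hTδ, h1, h2⟩ := hold T' hT'
        exact (m1_plain hδP hδNC hC1δ hC2δ hC1sub hC2sub ham1mem ham1v hbbmem hbbv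
          hdichD T' hTδ h1 h2).1
    · rcases Finset.mem_insert.1 hT' with rfl | hT'
      · obtain ⟨hTδ, h1, h2⟩ := hold T hT
        exact (m1_plain hδP hδNC hC1δ hC2δ hC1sub hC2sub ham1mem ham1v hbbmem hbbv
          hdichD T hTδ h1 h2).2
      · exact hδNC T (hold T hT).1 T' (hold T' hT').1 hne
  -- mixed noncrossing
  have hmixτ : ∀ A ∈ γ, ∀ C ∈ τ, ¬ crossOE A C ∧ ¬ crossEO C A := by
    intro A hA C hC
    rcases Finset.mem_insert.1 hC with rfl | hC
    · exact m1_mixed hC1δ hC2δ hmixδ hC1sub hC2sub ham1mem ham1v hbbmem hbbv hdichA A hA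
    · exact hmixδ A hA C (hold C hC).1
  have hτmem : τ ∈ NC n := ⟨hτP.1, hτP.2, hτNC⟩
  have hINT : IsNonCrossing (interlace γ τ) := interlace_NC_of hγNC hτNC hmixτ
  obtain ⟨E, hEδ, hEsub⟩ := hmax τ hτmem hINT (C1 ∪ C2) (Finset.mem_insert_self _ _)
  have ham1E : am1 ∈ E := hEsub (Finset.mem_union_left _ ham1mem)
  have hbbE : bb ∈ E := hEsub (Finset.mem_union_right _ hbbmem)
  have hEC2 : E = C2 := blk_unique hδP hEδ hC2δ hbbE hbbmem
  have := hC2sub am1 (hEC2 ▸ ham1E)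
  omega

end M1assemble
section Final

open Relation

variable {n : ℕ} {σ : Finset (Finset (Fin (2 * n)))}

lemma one_mem_NC (hn : 1 ≤ n) : ({Finset.univ} : Finset (Finset (Fin (2 * n)))) ∈ NC (2 * n) := by
  refine ⟨?_, ?_, ?_⟩
  · intro B hB
    rw [Finset.mem_singleton] at hB
    subst hB
    exact ⟨⟨0, by omega⟩, Finset.mem_univ _⟩
  · intro a
    exact ⟨Finset.univ, ⟨Finset.mem_singleton_self _, Finset.mem_univ a⟩,
      fun B hB => Finset.mem_singleton.1 hB.1⟩
  · intro B hB D hD hne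
    rw [Finset.mem_singleton] at hB hD
    exact absurd (hB.trans hD.symm) hne

/-- connectivity from the join condition -/
lemma conn_of_join (hn : 1 ≤ n) (hσ : σ ∈ NC (2 * n)) (hS : SameParity σ)
    (hJ : ∀ ρ ∈ NC (2 * n), ncle σ ρ → ncle (zeroHat n) ρ → ncle {Finset.univ} ρ) :
    ∀ a b : Fin n, EqvGen (fun a b => sameBlk (restrictOdd n σ) a b ∨
      sameBlk (restrictEven n σ) a b) a b := by
  set F := σ ∪ zeroHat n with hFdef
  have hρ : comps (sameBlk F) ∈ NC (2 * n) := comps_mem_NC (pairwise_F hσ)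
  have hle : ∀ B ∈ F, B.Nonempty → ∃ D ∈ comps (sameBlk F), B ⊆ D := by
    intro B hB ⟨b0, hb0⟩
    refine ⟨comp (sameBlk F) b0, Finset.mem_image_of_mem _ (Finset.mem_univ b0), ?_⟩
    intro y hy
    exact mem_comp.2 (EqvGen.rel _ _ ⟨B, hB, hb0, hy⟩)
  have hσle : ncle σ (comps (sameBlk F)) := by
    intro B hB
    exact hle B (Finset.mem_union_left _ hB) (hσ.1 B hB)
  have h0le : ncle (zeroHat n) (comps (sameBlk F)) := by
    intro B hB
    refine hle B (Finset.mem_union_right _ hB) ?_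
    simp only [zeroHat, Finset.mem_image] at hB
    obtain ⟨i, _, rfl⟩ := hB
    exact ⟨oddE n i, Finset.mem_insert_self _ _⟩
  obtain ⟨D, hD, hsub⟩ := hJ _ hρ hσle h0le Finset.univ (Finset.mem_singleton_self _)
  simp only [comps, Finset.mem_image] at hD
  obtain ⟨c, _, rfl⟩ := hD
  have hconn2 : ∀ x y : Fin (2 * n), EqvGen (sameBlk F) x y := by
    intro x y
    have hx : EqvGen (sameBlk F) c x := mem_comp.1 (hsub (Finset.mem_univ x))
    have hy : EqvGen (sameBlk F) c y := mem_comp.1 (hsub (Finset.mem_univ y))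
    exact (hx.symm _ _).trans _ _ _ hy
  intro a b
  have := conn_transfer hσ hS (hconn2 (oddE n a) (oddE n b))
  have ha : (⟨(oddE n a).1 / 2, by have := (oddE n a).2; omega⟩ : Fin n) = a :=
    Fin.ext (by simp only [oddE]; omega)
  have hb : (⟨(oddE n b).1 / 2, by have := (oddE n b).2; omega⟩ : Fin n) = b :=
    Fin.ext (by simp only [oddE]; omega)
  rwa [ha, hb] at this

end Final

/-- for `σ ∈ NC_S(2n)`, the restriction to the evens is the Kreweras
complement of the restriction to the odds iff `σ ∨ 0̂ₙ = 1_{2n}`. -/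
theorem stmt3 (n : ℕ) (hn : 1 ≤ n) (σ : Finset (Finset (Fin (2 * n))))
    (hσ : σ ∈ NC (2 * n)) (hS : SameParity σ) :
    IsKreweras (restrictOdd n σ) (restrictEven n σ) ↔
      IsJoin (2 * n) σ (zeroHat n) {Finset.univ} := by
  constructor
  · intro hK
    refine ⟨one_mem_NC hn, ?_, ?_, ?_⟩
    · intro B hB
      exact ⟨Finset.univ, Finset.mem_singleton_self _, Finset.subset_univ B⟩
    · intro B hB
      exact ⟨Finset.univ, Finset.mem_singleton_self _, Finset.subset_univ B⟩
    · intro ρ hρ h1 h2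
      obtain ⟨D, hD, hsub⟩ := M1core hn hσ hS hK.2.2 ρ hρ h1 h2
      intro B hB
      rw [Finset.mem_singleton] at hB
      subst hB
      exact ⟨D, hD, hsub⟩
  · intro hJ
    refine ⟨restrictEven_mem_NC hσ hS, ?_, ?_⟩
    · rw [interlace_restrict_eq hn hσ hS]
      exact hσ.2.2
    · intro τ hτ hint
      have hγP := restrictOdd_isPart (n := n) (σ := σ) hσ
      have hδP := restrictEven_isPart (n := n) (σ := σ) hσ
      have hINC : IsNonCrossing (interlace (restrictOdd n σ) (restrictEven n σ)) := by
        rw [interlace_restrict_eq hn hσ hS]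
        exact hσ.2.2
      have hmixδ := interlace_mixed hINC hγP.1 hδP.1
      have hmixτ := interlace_mixed hint hγP.1 hτ.1
      have hconn := conn_of_join hn hσ hS hJ.2.2.2
      exact M2core hn hγP hδP hτ.1 hmixδ hmixτ hconn
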